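/- arXiv:1404.5148 — 11 statements merged into one kernel-verified Lean document; each statement's English description precedes it below -/
import Mathlib

section
/- Let ω₀ > 0, b₁, b₂ ∈ ℝ, and λ ∈ ℂ with λ ≠ 0. Then λ is an eigenvalue of the nonlocal problem NP(ω₀, b₁, b₂) if and only if sinh(λω₀) · (2·cosh(λω₀) + b₁ + b₂) = 0. -/
open Real Set

lemma hasDerivAt_chc (lam : ℂ) (x : ℝ) :
    HasDerivAt (fun ω : ℝ => Complex.cosh (lam * ω)) (lam * Complex.sinh (lam * x)) x := by
  have h1 : HasDerivAt (fun z : ℂ => Complex.cosh (lam * z)) (lam * Complex.sinh (lam * x)) (x : ℂ) := by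
    have h2 : HasDerivAt (fun z : ℂ => lam * z) lam (x : ℂ) := by
      simpa using (hasDerivAt_id (x : ℂ)).const_mul lam
    exact ((Complex.hasDerivAt_cosh (lam * x)).comp (x : ℂ) h2).congr_deriv (mul_comm _ _)
  exact h1.comp_ofReal

lemma hasDerivAt_shc (lam : ℂ) (x : ℝ) :
    HasDerivAt (fun ω : ℝ => Complex.sinh (lam * ω)) (lam * Complex.cosh (lam * x)) x := by
  have h1 : HasDerivAt (fun z : ℂ => Complex.sinh (lam * z)) (lam * Complex.cosh (lam * x)) (x : ℂ) := by
    have h2 : HasDerivAt (fun z : ℂ => lam * z) lam (x : ℂ) := by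
      simpa using (hasDerivAt_id (x : ℂ)).const_mul lam
    exact ((Complex.hasDerivAt_sinh (lam * x)).comp (x : ℂ) h2).congr_deriv (mul_comm _ _)
  exact h1.comp_ofReal

/-- an explicit eigenfunction candidate `A cosh(λω) + B sinh(λω)` -/
lemma hasDerivAt_comb (lam A B : ℂ) (x : ℝ) :
    HasDerivAt (fun ω : ℝ => A * Complex.cosh (lam * ω) + B * Complex.sinh (lam * ω))
      (A * (lam * Complex.sinh (lam * x)) + B * (lam * Complex.cosh (lam * x))) x :=
  ((hasDerivAt_chc lam x).const_mul A).add ((hasDerivAt_shc lam x).const_mul B)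

lemma comb_props (lam A B : ℂ) (φ : ℝ → ℂ)
    (hφdef : φ = fun ω : ℝ => A * Complex.cosh (lam * ω) + B * Complex.sinh (lam * ω)) :
    Differentiable ℝ φ ∧ Differentiable ℝ (deriv φ) ∧
      ∀ ω : ℝ, deriv (deriv φ) ω = lam ^ 2 * φ ω := by
  have hd : ∀ x : ℝ, HasDerivAt φ
      (lam * A * Complex.sinh (lam * x) + lam * B * Complex.cosh (lam * x)) x := by
    intro x
    rw [hφdef]
    have := hasDerivAt_comb lam A B x
    convert this using 1; ring
  have hderiv : deriv φ = fun x : ℝ =>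
      lam * A * Complex.sinh (lam * x) + lam * B * Complex.cosh (lam * x) :=
    funext fun x => (hd x).deriv
  have hd2 : ∀ x : ℝ, HasDerivAt (deriv φ) (lam ^ 2 * φ x) x := by
    intro x
    rw [hderiv, hφdef]
    have := ((hasDerivAt_shc lam x).const_mul (lam * A)).add
      ((hasDerivAt_chc lam x).const_mul (lam * B))
    refine this.congr_deriv (Eq.symm ?_)
    show lam ^ 2 * (A * Complex.cosh (lam * x) + B * Complex.sinh (lam * x)) = _
    ring
  exact ⟨fun x => (hd x).differentiableAt, fun x => (hd2 x).differentiableAt,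
    fun x => (hd2 x).deriv⟩

/-- `lam` is an eigenvalue of the nonlocal problem `NP(ω₀, b₁, b₂)`:
there is a twice differentiable `φ : ℝ → ℂ`, not identically zero on `[-ω₀, ω₀]`,
with `φ'' = lam² φ` on `[-ω₀, ω₀]`, `φ(-ω₀) + b₁ φ(0) = 0` and `φ(ω₀) + b₂ φ(0) = 0`. -/
def NPEigen (ω₀ b₁ b₂ : ℝ) (lam : ℂ) : Prop :=
  ∃ φ : ℝ → ℂ,
    Differentiable ℝ φ ∧ Differentiable ℝ (deriv φ) ∧
    (∃ ω ∈ Icc (-ω₀) ω₀, φ ω ≠ 0) ∧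
    (∀ ω ∈ Icc (-ω₀) ω₀, deriv (deriv φ) ω = lam ^ 2 * φ ω) ∧
    φ (-ω₀) + (b₁ : ℂ) * φ 0 = 0 ∧ φ ω₀ + (b₂ : ℂ) * φ 0 = 0

theorem nonzero_eigenvalue_iff (ω₀ b₁ b₂ : ℝ) (hω : ω₀ > 0) (lam : ℂ) (hlam : lam ≠ 0) :
    NPEigen ω₀ b₁ b₂ lam ↔
      Complex.sinh (lam * (ω₀ : ℂ)) *
        (2 * Complex.cosh (lam * (ω₀ : ℂ)) + (b₁ : ℂ) + (b₂ : ℂ)) = 0 := by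
  set s := Complex.sinh (lam * (ω₀ : ℂ)) with hs_def
  set c := Complex.cosh (lam * (ω₀ : ℂ)) with hc_def
  have h0mem : (0 : ℝ) ∈ Icc (-ω₀) ω₀ := ⟨by linarith, le_of_lt hω⟩
  have hmem_neg : (-ω₀) ∈ Icc (-ω₀) ω₀ := ⟨le_refl _, by linarith⟩
  have hmem_pos : ω₀ ∈ Icc (-ω₀) ω₀ := ⟨by linarith, le_refl _⟩
  constructor
  · rintro ⟨φ, hφ, hφ', ⟨ω₁, hω₁, hne⟩, hode, hbc1, hbc2⟩
    -- conserved quantities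
    set E₁ : ℝ → ℂ := fun ω =>
      lam * φ ω * Complex.cosh (lam * ω) - deriv φ ω * Complex.sinh (lam * ω) with hE₁
    set E₂ : ℝ → ℂ := fun ω =>
      lam * φ ω * Complex.sinh (lam * ω) - deriv φ ω * Complex.cosh (lam * ω) with hE₂
    have hE₁d : ∀ x ∈ Icc (-ω₀) ω₀, HasDerivAt E₁ 0 x := by
      intro x hx
      have h := ((((hφ x).hasDerivAt.const_mul lam).mul (hasDerivAt_chc lam x)).sub
        (((hφ' x).hasDerivAt).mul (hasDerivAt_shc lam x)))
      refine h.congr_deriv (Eq.symm ?_)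
      rw [hode x hx]; ring
    have hE₂d : ∀ x ∈ Icc (-ω₀) ω₀, HasDerivAt E₂ 0 x := by
      intro x hx
      have h := ((((hφ x).hasDerivAt.const_mul lam).mul (hasDerivAt_shc lam x)).sub
        (((hφ' x).hasDerivAt).mul (hasDerivAt_chc lam x)))
      refine h.congr_deriv (Eq.symm ?_)
      rw [hode x hx]; ring
    have hE₁cont : ContinuousOn E₁ (Icc (-ω₀) ω₀) := by
      apply Continuous.continuousOn
      have hc1 := hφ.continuous; have hc2 := hφ'.continuous
      fun_prop
    have hE₂cont : ContinuousOn E₂ (Icc (-ω₀) ω₀) := by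
      apply Continuous.continuousOn
      have hc1 := hφ.continuous; have hc2 := hφ'.continuous
      fun_prop
    have hE₁const : ∀ x ∈ Icc (-ω₀) ω₀, E₁ x = E₁ (-ω₀) :=
      constant_of_has_deriv_right_zero hE₁cont
        (fun x hx => ((hE₁d x ⟨hx.1, le_of_lt hx.2⟩).hasDerivWithinAt))
    have hE₂const : ∀ x ∈ Icc (-ω₀) ω₀, E₂ x = E₂ (-ω₀) :=
      constant_of_has_deriv_right_zero hE₂cont
        (fun x hx => ((hE₂d x ⟨hx.1, le_of_lt hx.2⟩).hasDerivWithinAt))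
    -- representation
    set A := φ 0 with hA
    set B := deriv φ 0 with hB
    have hE₁0 : E₁ 0 = lam * A := by simp [hE₁, hA]
    have hE₂0 : E₂ 0 = -B := by simp [hE₂, hB]
    have hrep : ∀ ω ∈ Icc (-ω₀) ω₀,
        lam * φ ω = lam * A * Complex.cosh (lam * ω) + B * Complex.sinh (lam * ω) := by
      intro ω hωm
      have h1 : E₁ ω = lam * A := by rw [hE₁const ω hωm, ← hE₁const 0 h0mem, hE₁0]
      have h2 : E₂ ω = -B := by rw [hE₂const ω hωm, ← hE₂const 0 h0mem, hE₂0]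
      have hpy : Complex.cosh (lam * ω) ^ 2 - Complex.sinh (lam * ω) ^ 2 = 1 :=
        Complex.cosh_sq_sub_sinh_sq _
      have key : E₁ ω * Complex.cosh (lam * ω) - E₂ ω * Complex.sinh (lam * ω)
          = lam * φ ω := by
        simp only [hE₁, hE₂]
        linear_combination (lam * φ ω) * hpy
      rw [h1, h2] at key
      linear_combination -key
    by_contra hcon
    have hsne : s ≠ 0 := fun hz => hcon (by rw [hz, zero_mul])
    have hfne : 2 * c + (b₁ : ℂ) + (b₂ : ℂ) ≠ 0 := fun hz => hcon (by rw [hz, mul_zero])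
    have hpush : (((-ω₀ : ℝ)) : ℂ) = -(ω₀ : ℂ) := by push_cast; ring
    have h1 := hrep (-ω₀) hmem_neg
    rw [hpush, mul_neg, Complex.cosh_neg, Complex.sinh_neg] at h1
    have h2 := hrep ω₀ hmem_pos
    rw [← hc_def, ← hs_def] at h1 h2
    have hsum : lam * A * (2 * c + (b₁ : ℂ) + (b₂ : ℂ)) = 0 := by
      linear_combination lam * hbc1 + lam * hbc2 - h1 - h2
    have hA0 : A = 0 := by
      rcases mul_eq_zero.mp hsum with h' | h'
      · exact (mul_eq_zero.mp h').resolve_left hlam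
      · exact absurd h' hfne
    have hB0 : B = 0 := by
      rw [hA0] at h2 hbc2
      have hB : B * s = 0 := by linear_combination -h2 + lam * hbc2
      exact (mul_eq_zero.mp hB).resolve_right hsne
    have hz : lam * φ ω₁ = 0 := by rw [hrep ω₁ hω₁, hA0, hB0]; ring
    exact hne ((mul_eq_zero.mp hz).resolve_left hlam)
  · intro h
    have hpush : (((-ω₀ : ℝ)) : ℂ) = -(ω₀ : ℂ) := by push_cast; ring
    by_cases hs0 : s = 0
    · -- take φ = sinh (λ ω)
      have hdef : (fun ω : ℝ => Complex.sinh (lam * ω)) =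
          fun ω : ℝ => (0 : ℂ) * Complex.cosh (lam * ω) + 1 * Complex.sinh (lam * ω) := by
        funext ω; ring
      obtain ⟨hd1, hd2, hd3⟩ := comb_props lam 0 1 _ hdef
      refine ⟨fun ω : ℝ => Complex.sinh (lam * ω), hd1, hd2, ?_, fun ω _ => hd3 ω, ?_, ?_⟩
      · by_contra hall
        push_neg at hall
        have hev : (fun ω : ℝ => Complex.sinh (lam * ω)) =ᶠ[nhds (0 : ℝ)] fun _ => 0 := by
          filter_upwards [Icc_mem_nhds (by linarith : -ω₀ < (0 : ℝ)) hω] with x hx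
            using hall x hx
        have hde := hev.deriv_eq
        rw [(hasDerivAt_shc lam 0).deriv] at hde
        simp at hde
        exact hlam hde
      · show Complex.sinh (lam * ((-ω₀ : ℝ) : ℂ)) + (b₁ : ℂ) * Complex.sinh (lam * ((0 : ℝ) : ℂ)) = 0
        rw [hpush, mul_neg, Complex.sinh_neg, ← hs_def, hs0]
        simp
      · show Complex.sinh (lam * ((ω₀ : ℝ) : ℂ)) + (b₂ : ℂ) * Complex.sinh (lam * ((0 : ℝ) : ℂ)) = 0
        rw [← hs_def, hs0]
        simp
    · have hfac : 2 * c + (b₁ : ℂ) + (b₂ : ℂ) = 0 :=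
        (mul_eq_zero.mp h).resolve_left hs0
      set A : ℂ := 2 * s with hA
      set B : ℂ := (b₁ : ℂ) - (b₂ : ℂ) with hB
      obtain ⟨hd1, hd2, hd3⟩ := comb_props lam A B
        (fun ω : ℝ => A * Complex.cosh (lam * ω) + B * Complex.sinh (lam * ω)) rfl
      refine ⟨_, hd1, hd2, ⟨0, h0mem, ?_⟩, fun ω _ => hd3 ω, ?_, ?_⟩
      · show A * Complex.cosh (lam * ((0 : ℝ) : ℂ)) + B * Complex.sinh (lam * ((0 : ℝ) : ℂ)) ≠ 0
        simp [hA]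
        exact hs0
      · show A * Complex.cosh (lam * ((-ω₀ : ℝ) : ℂ)) + B * Complex.sinh (lam * ((-ω₀ : ℝ) : ℂ)) +
          (b₁ : ℂ) * (A * Complex.cosh (lam * ((0 : ℝ) : ℂ)) + B * Complex.sinh (lam * ((0 : ℝ) : ℂ))) = 0
        rw [hpush, mul_neg, Complex.sinh_neg, Complex.cosh_neg, ← hs_def, ← hc_def]
        push_cast
        simp only [Complex.ofReal_zero, mul_zero, Complex.cosh_zero, Complex.sinh_zero]
        rw [hA, hB]
        linear_combination s * hfac
      · show A * Complex.cosh (lam * ((ω₀ : ℝ) : ℂ)) + B * Complex.sinh (lam * ((ω₀ : ℝ) : ℂ)) +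
          (b₂ : ℂ) * (A * Complex.cosh (lam * ((0 : ℝ) : ℂ)) + B * Complex.sinh (lam * ((0 : ℝ) : ℂ))) = 0
        rw [← hs_def, ← hc_def]
        simp only [Complex.ofReal_zero, mul_zero, Complex.cosh_zero, Complex.sinh_zero]
        rw [hA, hB]
        linear_combination s * hfac
end

section
/- Let b₁ ∈ ℝ and set b₂ = −b₁, and take ω₀ = π/2. Then a nonzero λ ∈ ℂ is an eigenvalue of the nonlocal problem NP(π/2, b₁, −b₁) if and only if λ = k·i for some nonzero integer k. -/
open Real Set

lemma hasDerivAt_cexp_real (c : ℂ) (x : ℝ) :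
    HasDerivAt (fun ω : ℝ => Complex.exp (c * ω)) (c * Complex.exp (c * x)) x := by
  have h1 : HasDerivAt (fun ω : ℝ => ((ω : ℂ))) 1 x := (hasDerivAt_id x).ofReal_comp
  have h2 := (h1.const_mul c).cexp
  simpa [mul_comm] using h2

lemma expComb_hasDerivAt (A B c d : ℂ) (x : ℝ) :
    HasDerivAt (fun ω : ℝ => A * Complex.exp (c * ω) + B * Complex.exp (d * ω))
      (A * c * Complex.exp (c * x) + B * d * Complex.exp (d * x)) x := by
  have h1 := (hasDerivAt_cexp_real c x).const_mul A
  have h2 := (hasDerivAt_cexp_real d x).const_mul B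
  have := h1.add h2
  refine this.congr_deriv ?_
  ring

lemma ode_exp {f : ℝ → ℂ} (hf : Differentiable ℝ f) {c : ℂ} {a b : ℝ}
    (hode : ∀ ω ∈ Icc a b, deriv f ω = c * f ω) :
    ∀ ω ∈ Icc a b, f ω = f a * Complex.exp (c * (ω - a)) := by
  intro ω hω
  set h : ℝ → ℂ := fun t => f t * Complex.exp (-c * t) with hh
  have key : ∀ t ∈ Icc a ω, h t = h a := by
    apply constant_of_has_deriv_right_zero
    · exact (hf.continuous.mul (Complex.continuous_exp.comp
        (by continuity))).continuousOn
    · intro x hx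
      have hx' : x ∈ Icc a b := ⟨hx.1, le_trans hx.2.le hω.2⟩
      have h1 : HasDerivAt f (c * f x) x := by
        have := (hf x).hasDerivAt
        rwa [hode x hx'] at this
      have h2 : HasDerivAt (fun t : ℝ => Complex.exp (-c * t))
          (-c * Complex.exp (-c * x)) x := hasDerivAt_cexp_real _ _
      have h3 : HasDerivAt h 0 x := by
        have := h1.mul h2
        refine this.congr_deriv ?_
        ring
      exact h3.hasDerivWithinAt
  have hkey := key ω ⟨hω.1, le_rfl⟩
  have hne : Complex.exp (-c * ω) ≠ 0 := Complex.exp_ne_zero _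
  have : f ω * Complex.exp (-c * ω) = f a * Complex.exp (-c * a) := hkey
  have h1 : f ω = f ω * Complex.exp (-c * ω) * Complex.exp (c * ω) := by
    rw [mul_assoc, ← Complex.exp_add]; simp
  rw [h1, this, mul_assoc, ← Complex.exp_add]
  ring_nf

lemma expComb_deriv (A B c d : ℂ) :
    Differentiable ℝ (fun ω : ℝ => A * Complex.exp (c * ω) + B * Complex.exp (d * ω)) ∧
    deriv (fun ω : ℝ => A * Complex.exp (c * ω) + B * Complex.exp (d * ω)) =
      (fun ω : ℝ => (A * c) * Complex.exp (c * ω) + (B * d) * Complex.exp (d * ω)) := by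
  constructor
  · intro x
    exact (expComb_hasDerivAt A B c d x).differentiableAt
  · funext x
    have := (expComb_hasDerivAt A B c d x).deriv
    rw [this]

lemma backward_dir (b₁ : ℝ) (lam A B : ℂ)
    (hw : ∃ ω ∈ Icc (-(π/2)) (π/2),
        A * Complex.exp (lam * ω) + B * Complex.exp (-lam * ω) ≠ 0)
    (hbc1 : A * Complex.exp (lam * (-(π/2) : ℝ)) + B * Complex.exp (-lam * (-(π/2) : ℝ))
        + b₁ * (A + B) = 0)
    (hbc2 : A * Complex.exp (lam * ((π/2) : ℝ)) + B * Complex.exp (-lam * ((π/2) : ℝ))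
        - b₁ * (A + B) = 0) :
    NPEigen (π/2) b₁ (-b₁) lam := by
  refine ⟨fun ω : ℝ => A * Complex.exp (lam * ω) + B * Complex.exp (-lam * ω), ?_, ?_, ?_, ?_, ?_, ?_⟩
  · exact (expComb_deriv A B lam (-lam)).1
  · rw [(expComb_deriv A B lam (-lam)).2]
    exact (expComb_deriv (A*lam) (B*(-lam)) lam (-lam)).1
  · exact hw
  · intro ω hω
    rw [(expComb_deriv A B lam (-lam)).2, (expComb_deriv (A*lam) (B*(-lam)) lam (-lam)).2]
    ring
  · simpa [Complex.exp_zero] using hbc1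
  · push_cast
    simpa [Complex.exp_zero, sub_eq_add_neg] using hbc2

lemma of_int (b₁ : ℝ) (k : ℤ) (hk : k ≠ 0) :
    NPEigen (π/2) b₁ (-b₁) ((k:ℂ) * Complex.I) := by
  set lam : ℂ := (k:ℂ) * Complex.I with hlam
  set E : ℂ := Complex.exp (lam * (((π/2) : ℝ) : ℂ)) with hE
  have hE0 : E ≠ 0 := Complex.exp_ne_zero _
  have hkC : (k:ℂ) ≠ 0 := Int.cast_ne_zero.2 hk
  have hE2 : E * E = (-1 : ℂ) ^ k := by
    rw [hE, ← Complex.exp_add]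
    have harg : lam * (((π/2) : ℝ) : ℂ) + lam * (((π/2) : ℝ) : ℂ)
        = (k : ℂ) * ((π : ℂ) * Complex.I) := by
      rw [hlam]; push_cast; ring
    rw [harg, Complex.exp_int_mul, Complex.exp_pi_mul_I]
  have h1 : Complex.exp (lam * ((-(π/2) : ℝ) : ℂ)) = E⁻¹ := by
    rw [show lam * ((-(π/2) : ℝ) : ℂ) = -(lam * (((π/2) : ℝ) : ℂ)) by push_cast; ring,
      Complex.exp_neg, hE]
  have h2 : Complex.exp (-lam * ((-(π/2) : ℝ) : ℂ)) = E := by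
    rw [show -lam * ((-(π/2) : ℝ) : ℂ) = lam * (((π/2) : ℝ) : ℂ) by push_cast; ring, hE]
  have h3 : Complex.exp (-lam * (((π/2) : ℝ) : ℂ)) = E⁻¹ := by
    rw [show -lam * (((π/2) : ℝ) : ℂ) = -(lam * (((π/2) : ℝ) : ℂ)) by push_cast; ring,
      Complex.exp_neg, hE]
  rcases Int.even_or_odd k with hpar | hpar
  · -- even case: A = 1, B = -1
    have hE1 : E * E = 1 := by rw [hE2, hpar.neg_one_zpow]
    apply backward_dir b₁ lam 1 (-1)
    · refine ⟨π/(2*k), ?_, ?_⟩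
      · have hk1 : (1:ℝ) ≤ |(k:ℝ)| := by
          rw [← Int.cast_abs]; exact_mod_cast Int.one_le_abs hk
        have hπ : (0:ℝ) < π := Real.pi_pos
        have habs : |π/(2*k)| ≤ π/2 := by
          rw [abs_div, abs_of_pos hπ, abs_mul, abs_two]
          rw [div_le_div_iff₀ (by positivity) (by norm_num)]
          nlinarith
        exact abs_le.mp habs
      · have harg : lam * ((π/(2*k) : ℝ) : ℂ) = ((π/2 : ℝ) : ℂ) * Complex.I := by
          rw [hlam]; push_cast; field_simp
        have harg2 : -lam * ((π/(2*k) : ℝ) : ℂ) = -(((π/2 : ℝ) : ℂ) * Complex.I) := by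
          rw [neg_mul, harg]
        rw [harg, harg2, Complex.exp_neg, Complex.exp_mul_I]
        rw [← Complex.ofReal_cos, ← Complex.ofReal_sin, Real.cos_pi_div_two,
          Real.sin_pi_div_two]
        simp [Complex.I_ne_zero]
    · have hinv : E⁻¹ = E := by
        rw [inv_eq_one_div, div_eq_iff hE0]; linear_combination -hE1
      rw [h1, h2, hinv]; ring
    · have hinv : E⁻¹ = E := by
        rw [inv_eq_one_div, div_eq_iff hE0]; linear_combination -hE1
      rw [← hE, h3, hinv]; ring
  · -- odd case: A = (1 - b₁ E)/2, B = (1 + b₁ E)/2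
    have hEm1 : E * E = -1 := by rw [hE2, hpar.neg_one_zpow]
    apply backward_dir b₁ lam ((1 - b₁ * E)/2) ((1 + b₁ * E)/2)
    · refine ⟨0, ?_, ?_⟩
      · constructor <;> [linarith [Real.pi_pos]; linarith [Real.pi_pos]]
      · simp only [Complex.ofReal_zero, mul_zero, Complex.exp_zero, mul_one]
        intro h
        apply one_ne_zero (α := ℂ)
        linear_combination h
    · have hinv : E⁻¹ = -E := by
        rw [inv_eq_one_div, div_eq_iff hE0]; linear_combination hEm1
      rw [h1, h2, hinv]
      linear_combination (b₁:ℂ) * hEm1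
    · have hinv : E⁻¹ = -E := by
        rw [inv_eq_one_div, div_eq_iff hE0]; linear_combination hEm1
      rw [← hE, h3, hinv]
      linear_combination (-b₁:ℂ) * hEm1

theorem eigenvalues_antisymmetric_case (b₁ : ℝ) (lam : ℂ) (hlam : lam ≠ 0) :
    NPEigen (π / 2) b₁ (-b₁) lam ↔ ∃ k : ℤ, k ≠ 0 ∧ lam = (k : ℂ) * Complex.I := by
  constructor
  · rintro ⟨φ, hφd, hφd2, ⟨w, hw, hφw⟩, hode, hbc1, hbc2⟩
    have hπ0 : (π : ℂ) ≠ 0 := by exact_mod_cast Real.pi_ne_zero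
    -- the two first-order factors
    have hgpd : Differentiable ℝ (fun t => deriv φ t - lam * φ t) :=
      hφd2.sub (hφd.const_mul lam)
    have hgmd : Differentiable ℝ (fun t => deriv φ t + lam * φ t) :=
      hφd2.add (hφd.const_mul lam)
    have hodep : ∀ ω ∈ Icc (-(π/2)) (π/2),
        deriv (fun t => deriv φ t - lam * φ t) ω
          = (-lam) * (deriv φ ω - lam * φ ω) := by
      intro ω hω
      rw [deriv_fun_sub (hφd2 ω) ((hφd ω).const_mul lam), deriv_const_mul lam (hφd ω),
        hode ω hω]
      ring
    have hodem : ∀ ω ∈ Icc (-(π/2)) (π/2),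
        deriv (fun t => deriv φ t + lam * φ t) ω
          = lam * (deriv φ ω + lam * φ ω) := by
      intro ω hω
      rw [deriv_fun_add (hφd2 ω) ((hφd ω).const_mul lam), deriv_const_mul lam (hφd ω),
        hode ω hω]
      ring
    have hgp := ode_exp hgpd hodep
    have hgm := ode_exp hgmd hodem
    set P : ℂ := deriv φ (-(π/2)) + lam * φ (-(π/2)) with hP
    set Q : ℂ := deriv φ (-(π/2)) - lam * φ (-(π/2)) with hQ
    have hrep : ∀ ω ∈ Icc (-(π/2)) (π/2),
        2 * lam * φ ω = P * Complex.exp (lam * ((ω : ℂ) - ((-(π/2) : ℝ) : ℂ)))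
          - Q * Complex.exp (-lam * ((ω : ℂ) - ((-(π/2) : ℝ) : ℂ))) := by
      intro ω hω
      have h1 := hgp ω hω
      have h2 := hgm ω hω
      linear_combination h2 - h1
    set u : ℂ := Complex.exp (lam * (((π/2) : ℝ) : ℂ)) with hu
    have hu0 : u ≠ 0 := Complex.exp_ne_zero _
    have hone : u * u⁻¹ = 1 := mul_inv_cancel₀ hu0
    have hmem0 : (0:ℝ) ∈ Icc (-(π/2)) (π/2) :=
      ⟨by linarith [Real.pi_pos], by linarith [Real.pi_pos]⟩
    have hmemm : (-(π/2) : ℝ) ∈ Icc (-(π/2)) (π/2) :=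
      ⟨le_rfl, by linarith [Real.pi_pos]⟩
    have hmemp : ((π/2) : ℝ) ∈ Icc (-(π/2)) (π/2) :=
      ⟨by linarith [Real.pi_pos], le_rfl⟩
    have eqm : 2 * lam * φ (-(π/2)) = P - Q := by
      have := hrep _ hmemm
      simpa only [sub_self, mul_zero, neg_mul, neg_zero, Complex.exp_zero, mul_one]
        using this
    have eq0 : 2 * lam * φ 0 = P * u - Q * u⁻¹ := by
      have := hrep _ hmem0
      rw [show lam * (((0:ℝ) : ℂ) - ((-(π/2) : ℝ) : ℂ)) = lam * (((π/2) : ℝ) : ℂ) by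
          push_cast; ring,
        show -lam * (((0:ℝ) : ℂ) - ((-(π/2) : ℝ) : ℂ)) = -(lam * (((π/2) : ℝ) : ℂ)) by
          push_cast; ring,
        Complex.exp_neg] at this
      exact this
    have eqp : 2 * lam * φ (π/2) = P * (u * u) - Q * (u * u)⁻¹ := by
      have := hrep _ hmemp
      rw [show lam * ((((π/2):ℝ) : ℂ) - ((-(π/2) : ℝ) : ℂ))
            = lam * (((π/2) : ℝ) : ℂ) + lam * (((π/2) : ℝ) : ℂ) by push_cast; ring,
        show -lam * ((((π/2):ℝ) : ℂ) - ((-(π/2) : ℝ) : ℂ))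
            = -(lam * (((π/2) : ℝ) : ℂ) + lam * (((π/2) : ℝ) : ℂ)) by push_cast; ring,
        Complex.exp_neg, Complex.exp_add] at this
      exact this
    push_cast at hbc2
    have E1 : P - Q + (b₁ : ℂ) * (P * u - Q * u⁻¹) = 0 := by
      linear_combination (2*lam) * hbc1 - eqm - (b₁ : ℂ) * eq0
    have E2 : P * (u*u) - Q * (u*u)⁻¹ - (b₁ : ℂ) * (P * u - Q * u⁻¹) = 0 := by
      linear_combination (2*lam) * hbc2 - eqp + (b₁ : ℂ) * eq0
    have hS : (P - Q) + (P * (u*u) - Q * (u*u)⁻¹) = 0 := by linear_combination E1 + E2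
    have key : (1 + u*u) * (P * (u*u) - Q) = 0 := by
      linear_combination (u*u) * hS + Q * (u*u⁻¹ + 1) * hone
    have hexp2 : Complex.exp (lam * (π : ℂ)) = u * u := by
      rw [show lam * (π : ℂ) = lam * (((π/2) : ℝ) : ℂ) + lam * (((π/2) : ℝ) : ℂ) by
        push_cast; ring, Complex.exp_add]
    rcases mul_eq_zero.mp key with hcase | hcase
    · -- u² = -1 : odd case
      have hexp : Complex.exp (lam * (π : ℂ) + (π : ℂ) * Complex.I) = 1 := by
        rw [Complex.exp_add, hexp2, Complex.exp_pi_mul_I]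
        linear_combination (-1 : ℂ) * hcase
      obtain ⟨n, hn⟩ := Complex.exp_eq_one_iff.mp hexp
      refine ⟨2*n - 1, by omega, ?_⟩
      apply mul_right_cancel₀ hπ0
      push_cast
      linear_combination hn
    · -- P u² = Q
      have E1' : P * (1 - u*u) = 0 := by
        linear_combination E1 - (1 + (b₁:ℂ) * u⁻¹) * hcase + (b₁:ℂ) * P * u * hone
      rcases mul_eq_zero.mp E1' with hP0 | h1u
      · exfalso
        have hQ0 : Q = 0 := by linear_combination -hcase + (u*u) * hP0
        have := hrep w hw
        rw [hP0, hQ0] at this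
        simp only [zero_mul, sub_zero] at this
        exact hφw (by
          have h2 : (2 * lam) * φ w = 0 := by linear_combination this
          rcases mul_eq_zero.mp h2 with h | h
          · exact absurd h (by simp [hlam])
          · exact h)
      · have hexp : Complex.exp (lam * (π : ℂ)) = 1 := by
          rw [hexp2]; linear_combination -h1u
        obtain ⟨n, hn⟩ := Complex.exp_eq_one_iff.mp hexp
        refine ⟨2*n, ?_, ?_⟩
        · intro h
          have hn0 : n = 0 := by omega
          rw [hn0] at hn
          simp only [Int.cast_zero, zero_mul] at hn
          rcases mul_eq_zero.mp hn with h' | h'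
          · exact hlam h'
          · exact hπ0 h'
        · have : lam * (π : ℂ) = ((2*n : ℤ) : ℂ) * Complex.I * (π : ℂ) := by
            push_cast
            linear_combination hn
          exact mul_right_cancel₀ hπ0 this
  · rintro ⟨k, hk, rfl⟩
    exact of_int b₁ k hk
end

section
/- Let b₁, b₂ ∈ ℝ with b₁ + b₂ ≠ 0, and let m be an odd integer. Then the nonlocal problem NP(π/2, b₁, b₂) has no eigenvalue λ ∈ ℂ with Im λ = m. -/
open Real Set

lemma cosh_re' (z : ℂ) : (Complex.cosh z).re = Real.cosh z.re * Real.cos z.im := by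
  have h : Complex.cosh z = Complex.cosh (z.re + z.im * Complex.I) := by rw [Complex.re_add_im]
  rw [h, Complex.cosh_add, Complex.cosh_mul_I, Complex.sinh_mul_I,
    ← Complex.ofReal_cosh, ← Complex.ofReal_sinh]
  simp [Complex.cos_ofReal_re, Complex.sin_ofReal_re]

lemma sinh_im' (z : ℂ) : (Complex.sinh z).im = Real.cosh z.re * Real.sin z.im := by
  have h : Complex.sinh z = Complex.sinh (z.re + z.im * Complex.I) := by rw [Complex.re_add_im]
  rw [h, Complex.sinh_add, Complex.cosh_mul_I, Complex.sinh_mul_I,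
    ← Complex.ofReal_cosh, ← Complex.ofReal_sinh]
  simp [Complex.cos_ofReal_re, Complex.sin_ofReal_re, Complex.cos_ofReal_im, Complex.sin_ofReal_im]

lemma hasDerivAt_ccosh (lam : ℂ) (x : ℝ) :
    HasDerivAt (fun w : ℝ => Complex.cosh (lam * w)) (lam * Complex.sinh (lam * x)) x := by
  have h := ((Complex.hasDerivAt_cosh (lam * x)).comp (x : ℂ)
      ((hasDerivAt_id (x : ℂ)).const_mul lam)).comp_ofReal
  simpa [Function.comp, mul_comm] using h

lemma hasDerivAt_csinh (lam : ℂ) (x : ℝ) :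
    HasDerivAt (fun w : ℝ => Complex.sinh (lam * w)) (lam * Complex.cosh (lam * x)) x := by
  have h := ((Complex.hasDerivAt_sinh (lam * x)).comp (x : ℂ)
      ((hasDerivAt_id (x : ℂ)).const_mul lam)).comp_ofReal
  simpa [Function.comp, mul_comm] using h

theorem no_eigenvalue_on_odd_lines (b₁ b₂ : ℝ) (hb : b₁ + b₂ ≠ 0) (m : ℤ) (hm : Odd m) :
    ∀ lam : ℂ, lam.im = (m : ℝ) → ¬ NPEigen (π / 2) b₁ b₂ lam := by
  rintro lam hlam ⟨φ, hφ1, hφ2, ⟨ω₁, hω₁, hφne⟩, hode, hbc1, hbc2⟩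
  obtain ⟨k, hk⟩ := hm
  have hm0 : (m : ℝ) ≠ 0 := by
    have : m ≠ 0 := by omega
    exact_mod_cast this
  have hlam0 : lam ≠ 0 := by
    intro h; rw [h] at hlam; exact hm0 hlam.symm
  set C : ℝ → ℂ := fun w => Complex.cosh (lam * w) with hCdef
  set S : ℝ → ℂ := fun w => Complex.sinh (lam * w) with hSdef
  set W₁ : ℝ → ℂ := fun w => φ w * (lam * S w) - deriv φ w * C w with hW₁def
  set W₂ : ℝ → ℂ := fun w => φ w * (lam * C w) - deriv φ w * S w with hW₂def
  have hCd : ∀ x : ℝ, HasDerivAt C (lam * S x) x := fun x => hasDerivAt_ccosh lam x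
  have hSd : ∀ x : ℝ, HasDerivAt S (lam * C x) x := fun x => hasDerivAt_csinh lam x
  have hW₁d : ∀ x : ℝ, HasDerivAt W₁
      ((lam ^ 2 * φ x - deriv (deriv φ) x) * C x) x := by
    intro x
    have h := ((hφ1 x).hasDerivAt.mul ((hSd x).const_mul lam)).sub
      ((hφ2 x).hasDerivAt.mul (hCd x))
    convert h using 1
    · rfl
    · rfl
    · ring
  have hW₂d : ∀ x : ℝ, HasDerivAt W₂
      ((lam ^ 2 * φ x - deriv (deriv φ) x) * S x) x := by
    intro x
    have h := ((hφ1 x).hasDerivAt.mul ((hCd x).const_mul lam)).sub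
      ((hφ2 x).hasDerivAt.mul (hSd x))
    convert h using 1
    · rfl
    · rfl
    · ring
  -- constancy on the interval
  have key : ∀ (W : ℝ → ℂ) (D : ℝ → ℂ),
      (∀ x : ℝ, HasDerivAt W ((lam ^ 2 * φ x - deriv (deriv φ) x) * D x) x) →
      ∀ x ∈ Icc (-(π/2)) (π/2), W x = W (-(π/2)) := by
    intro W D hW
    refine constant_of_has_deriv_right_zero (fun x _ => ((hW x).differentiableAt.continuousAt.continuousWithinAt)) ?_
    intro x hx
    have hx' : x ∈ Icc (-(π/2)) (π/2) := Ico_subset_Icc_self hx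
    have h0 : (lam ^ 2 * φ x - deriv (deriv φ) x) * D x = 0 := by
      rw [hode x hx']; ring
    exact (h0 ▸ hW x).hasDerivWithinAt
  have hK₁ := key W₁ C hW₁d
  have hK₂ := key W₂ S hW₂d
  -- pointwise representation
  have hrep : ∀ x ∈ Icc (-(π/2)) (π/2),
      lam * φ x = W₂ (-(π/2)) * C x - W₁ (-(π/2)) * S x := by
    intro x hx
    have hid : C x ^ 2 - S x ^ 2 = 1 := Complex.cosh_sq_sub_sinh_sq (lam * x)
    have : lam * φ x = W₂ x * C x - W₁ x * S x := by
      have : W₂ x * C x - W₁ x * S x = lam * φ x * (C x ^ 2 - S x ^ 2) := by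
        simp only [hW₁def, hW₂def]; ring
      rw [this, hid, mul_one]
    rw [this, hK₁ x hx, hK₂ x hx]
  set z : ℂ := lam * ((π/2 : ℝ) : ℂ) with hzdef
  have hCneg : C (-(π/2)) = Complex.cosh z := by
    show Complex.cosh (lam * ((-(π/2) : ℝ) : ℂ)) = Complex.cosh z
    rw [Complex.ofReal_neg, mul_neg, Complex.cosh_neg]
  have hSneg : S (-(π/2)) = -Complex.sinh z := by
    show Complex.sinh (lam * ((-(π/2) : ℝ) : ℂ)) = -Complex.sinh z
    rw [Complex.ofReal_neg, mul_neg, Complex.sinh_neg]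
  have hCpos : C (π/2) = Complex.cosh z := rfl
  have hSpos : S (π/2) = Complex.sinh z := rfl
  have hC0 : C 0 = 1 := by simp [hCdef]
  have hS0 : S 0 = 0 := by simp [hSdef]
  have hmem0 : (0:ℝ) ∈ Icc (-(π/2)) (π/2) := by
    constructor <;> nlinarith [pi_pos]
  have hmemp : (π/2 : ℝ) ∈ Icc (-(π/2)) (π/2) := by
    constructor <;> nlinarith [pi_pos]
  have hmemn : (-(π/2) : ℝ) ∈ Icc (-(π/2)) (π/2) := by
    constructor <;> nlinarith [pi_pos]
  have h0 := hrep 0 hmem0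
  rw [hC0, hS0] at h0
  -- h0 : lam * φ 0 = W₂ (-(π/2)) * 1 - W₁ (-(π/2)) * 0
  have hp := hrep (π/2) hmemp
  rw [hCpos, hSpos] at hp
  have hn := hrep (-(π/2)) hmemn
  rw [hCneg, hSneg] at hn
  -- z facts
  have hzim : z.im = (m : ℝ) * (π/2) := by
    simp [hzdef, Complex.mul_im, hlam]
  have hcos : Real.cos z.im = 0 := by
    rw [hzim, Real.cos_eq_zero_iff]
    exact ⟨k, by push_cast [hk]; ring⟩
  have hsin : Real.sin z.im ≠ 0 := by
    rw [hzim, Ne, Real.sin_eq_zero_iff]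
    rintro ⟨n, hn'⟩
    have h2 : ((2 * n - m : ℤ) : ℝ) * π = 0 := by push_cast; linarith [hn']
    rcases mul_eq_zero.mp h2 with h' | h'
    · have : (2 * n - m : ℤ) = 0 := by exact_mod_cast h'
      omega
    · exact pi_ne_zero h'
  -- step 1 : φ 0 = 0
  have hsum : φ (π/2) + φ (-(π/2)) = -((b₁ + b₂ : ℝ) : ℂ) * φ 0 := by
    have h1 : φ (-(π/2)) = -(b₁ : ℂ) * φ 0 := by linear_combination hbc1
    have h2 : φ (π/2) = -(b₂ : ℂ) * φ 0 := by linear_combination hbc2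
    rw [h1, h2]; push_cast; ring
  have hfac : φ 0 * (2 * Complex.cosh z + ((b₁ + b₂ : ℝ) : ℂ)) = 0 := by
    have hs : lam * (φ (π/2) + φ (-(π/2))) = 2 * (lam * φ 0) * Complex.cosh z := by
      rw [mul_add, hp, hn, h0]; ring
    rw [hsum] at hs
    have h' : lam * (φ 0 * (2 * Complex.cosh z + ((b₁ + b₂ : ℝ) : ℂ))) = lam * 0 := by
      rw [mul_zero]; linear_combination -hs
    exact mul_left_cancel₀ hlam0 h'
  have hfacne : (2 * Complex.cosh z + ((b₁ + b₂ : ℝ) : ℂ)) ≠ 0 := by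
    intro h
    have hre : (2 * Complex.cosh z + ((b₁ + b₂ : ℝ) : ℂ)).re = 0 := by rw [h]; rfl
    rw [Complex.add_re, Complex.ofReal_re] at hre
    have : (2 * Complex.cosh z).re = 2 * (Complex.cosh z).re := by
      simp [Complex.mul_re]
    rw [this, cosh_re', hcos] at hre
    simp at hre
    exact hb hre
  have hφ0 : φ 0 = 0 := by
    rcases mul_eq_zero.mp hfac with h | h
    · exact h
    · exact absurd h hfacne
  -- step 2 : W₁ (-(π/2)) = 0
  have hK2zero : W₂ (-(π/2)) = 0 := by
    have : lam * φ 0 = W₂ (-(π/2)) := by rw [h0]; ring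
    rw [hφ0, mul_zero] at this; exact this.symm
  have hφp : φ (π/2) = 0 := by
    have := hbc2
    rw [hφ0, mul_zero, add_zero] at this; exact this
  have hsinhz : Complex.sinh z ≠ 0 := by
    intro h
    have : (Complex.sinh z).im = 0 := by rw [h]; rfl
    rw [sinh_im'] at this
    rcases mul_eq_zero.mp this with h' | h'
    · exact absurd h' (ne_of_gt (Real.cosh_pos _))
    · exact hsin h'
  have hK1zero : W₁ (-(π/2)) = 0 := by
    have : W₁ (-(π/2)) * Complex.sinh z = 0 := by
      have h := hp
      rw [hφp, hK2zero, mul_zero, zero_mul, zero_sub] at h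
      exact neg_eq_zero.mp h.symm
    rcases mul_eq_zero.mp this with h | h
    · exact h
    · exact absurd h hsinhz
  -- conclude
  have : φ ω₁ = 0 := by
    have h := hrep ω₁ hω₁
    rw [hK1zero, hK2zero] at h
    simp at h
    rcases h with h | h
    · exact absurd h hlam0
    · exact h
  exact hφne this
end

section
/- Let b₁, b₂ ∈ ℝ and let k be a nonzero integer with b₁ + b₂ ≠ 2·(−1)^{k+1}, and set λ = 2k·i. Then for every twice differentiable φ⁰ : ℝ → ℂ, not identically zero on [−π/2, π/2], satisfying (φ⁰)''(ω) = λ²·φ⁰(ω) on [−π/2, π/2] together with φ⁰(−π/2) + b₁·φ⁰(0) = 0 and φ⁰(π/2) + b₂·φ⁰(0) = 0, there exists NO twice differentiable φ : ℝ → ℂ with φ''(ω) − λ²·φ(ω) = 2λ·φ⁰(ω) for all ω ∈ [−π/2, π/2] and φ(−π/2) + b₁·φ(0) = 0, φ(π/2) + b₂·φ(0) = 0. (That is, the eigenvalue λ = 2ki of NP(π/2, b₁, b₂) has no associated vectors.) -/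
open Real Set

private lemma hasDerivAt_const_mul_ofReal' (c : ℂ) (x : ℝ) :
    HasDerivAt (fun t : ℝ => c * (t : ℂ)) c x := by
  simpa using (Complex.ofRealCLM.hasDerivAt (x := x)).const_mul c

private lemma hasDerivAt_cexp_mul' (μ : ℂ) (x : ℝ) :
    HasDerivAt (fun t : ℝ => Complex.exp (μ * t)) (μ * Complex.exp (μ * x)) x := by
  simpa [mul_comm] using (hasDerivAt_const_mul_ofReal' μ x).cexp

private lemma const_on_pi' {f : ℝ → ℂ} (hf : ∀ x : ℝ, DifferentiableAt ℝ f x)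
    (h0 : ∀ x ∈ Icc (-(π / 2)) (π / 2), deriv f x = 0) :
    ∀ x ∈ Icc (-(π / 2)) (π / 2), f x = f 0 := by
  have hπ : (0 : ℝ) < π / 2 := by positivity
  have H : ∀ x ∈ Icc (-(π / 2)) (π / 2), f x = f (-(π / 2)) := by
    apply constant_of_derivWithin_zero (fun x hx => (hf x).differentiableWithinAt)
    intro x hx
    rw [(hf x).derivWithin (uniqueDiffOn_Icc (by linarith) x (Ico_subset_Icc_self hx))]
    exact h0 x (Ico_subset_Icc_self hx)
  intro x hx
  exact (H x hx).trans (H 0 ⟨by linarith, le_of_lt hπ⟩).symm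

theorem no_associated_vector_even_case (b₁ b₂ : ℝ) (k : ℤ) (hk : k ≠ 0)
    (hb : b₁ + b₂ ≠ 2 * (-1 : ℝ) ^ (k + 1)) :
    ∀ φ₀ : ℝ → ℂ,
      Differentiable ℝ φ₀ → Differentiable ℝ (deriv φ₀) →
      (∃ ω ∈ Icc (-(π / 2)) (π / 2), φ₀ ω ≠ 0) →
      (∀ ω ∈ Icc (-(π / 2)) (π / 2),
        deriv (deriv φ₀) ω = ((2 * (k : ℂ)) * Complex.I) ^ 2 * φ₀ ω) →
      φ₀ (-(π / 2)) + (b₁ : ℂ) * φ₀ 0 = 0 →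
      φ₀ (π / 2) + (b₂ : ℂ) * φ₀ 0 = 0 →
      ¬ ∃ φ : ℝ → ℂ,
          Differentiable ℝ φ ∧ Differentiable ℝ (deriv φ) ∧
          (∀ ω ∈ Icc (-(π / 2)) (π / 2),
            deriv (deriv φ) ω - ((2 * (k : ℂ)) * Complex.I) ^ 2 * φ ω
              = 2 * ((2 * (k : ℂ)) * Complex.I) * φ₀ ω) ∧
          φ (-(π / 2)) + (b₁ : ℂ) * φ 0 = 0 ∧
          φ (π / 2) + (b₂ : ℂ) * φ 0 = 0 := by
  intro φ₀ hd1 hd2 hne hode hbc1 hbc2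
  rintro ⟨φ, hD1, hD2, hφode, hφbc1, hφbc2⟩
  set l : ℂ := (2 * (k : ℂ)) * Complex.I with hldef
  have hπ : (0 : ℝ) < π / 2 := by positivity
  have memP : (π / 2) ∈ Icc (-(π / 2)) (π / 2) := ⟨by linarith, le_rfl⟩
  have memN : (-(π / 2)) ∈ Icc (-(π / 2)) (π / 2) := ⟨le_rfl, by linarith⟩
  have hl0 : l ≠ 0 := by
    rw [hldef]
    refine mul_ne_zero ?_ Complex.I_ne_zero
    have : ((k : ℂ)) ≠ 0 := Int.cast_ne_zero.mpr hk
    exact mul_ne_zero two_ne_zero this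
  have h2l : (2 : ℂ) * l ≠ 0 := mul_ne_zero two_ne_zero hl0
  set ε : ℂ := (-1 : ℂ) ^ k with hεdef
  have hexpk : ∀ n : ℤ, Complex.exp ((n : ℂ) * ↑π * Complex.I) = (-1 : ℂ) ^ n := by
    intro n
    rw [mul_assoc, Complex.exp_int_mul, Complex.exp_pi_mul_I]
  have hεε : ε * ε = 1 := by
    rw [hεdef, ← mul_zpow]
    norm_num
  have hε0 : ε ≠ 0 := by
    intro h
    rw [h, mul_zero] at hεε
    exact zero_ne_one hεε
  have hεinv : (-1 : ℂ) ^ (-k) = ε := by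
    rw [zpow_neg, ← hεdef]
    exact inv_eq_of_mul_eq_one_left hεε
  have hEp : Complex.exp (l * ((π / 2 : ℝ) : ℂ)) = ε := by
    have h : l * ((π / 2 : ℝ) : ℂ) = (k : ℂ) * ↑π * Complex.I := by
      rw [hldef]; push_cast; ring
    rw [h, hexpk, hεdef]
  have hEn : Complex.exp (l * ((-(π / 2) : ℝ) : ℂ)) = ε := by
    have h : l * ((-(π / 2) : ℝ) : ℂ) = ((-k : ℤ) : ℂ) * ↑π * Complex.I := by
      rw [hldef]; push_cast; ring
    rw [h, hexpk, hεinv]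
  have hEmp : Complex.exp (-l * ((π / 2 : ℝ) : ℂ)) = ε := by
    have h : -l * ((π / 2 : ℝ) : ℂ) = ((-k : ℤ) : ℂ) * ↑π * Complex.I := by
      rw [hldef]; push_cast; ring
    rw [h, hexpk, hεinv]
  have hEmn : Complex.exp (-l * ((-(π / 2) : ℝ) : ℂ)) = ε := by
    have h : -l * ((-(π / 2) : ℝ) : ℂ) = (k : ℂ) * ↑π * Complex.I := by
      rw [hldef]; push_cast; ring
    rw [h, hexpk, hεdef]
  have h2Ep : Complex.exp (2 * l * ((π / 2 : ℝ) : ℂ)) = 1 := by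
    have h : 2 * l * ((π / 2 : ℝ) : ℂ) = ((2 * k : ℤ) : ℂ) * ↑π * Complex.I := by
      rw [hldef]; push_cast; ring
    rw [h, hexpk, zpow_mul]
    norm_num
  have h2En : Complex.exp (2 * l * ((-(π / 2) : ℝ) : ℂ)) = 1 := by
    have h : 2 * l * ((-(π / 2) : ℝ) : ℂ) = ((-(2 * k) : ℤ) : ℂ) * ↑π * Complex.I := by
      rw [hldef]; push_cast; ring
    rw [h, hexpk, zpow_neg, zpow_mul]
    norm_num
  have h2Emp : Complex.exp (-(2 * l) * ((π / 2 : ℝ) : ℂ)) = 1 := by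
    have h : -(2 * l) * ((π / 2 : ℝ) : ℂ) = ((-(2 * k) : ℤ) : ℂ) * ↑π * Complex.I := by
      rw [hldef]; push_cast; ring
    rw [h, hexpk, zpow_neg, zpow_mul]
    norm_num
  have h2Emn : Complex.exp (-(2 * l) * ((-(π / 2) : ℝ) : ℂ)) = 1 := by
    have h : -(2 * l) * ((-(π / 2) : ℝ) : ℂ) = ((2 * k : ℤ) : ℂ) * ↑π * Complex.I := by
      rw [hldef]; push_cast; ring
    rw [h, hexpk, zpow_mul]
    norm_num
  have hprod : ∀ x : ℝ, Complex.exp (l * x) * Complex.exp (-l * x) = 1 := by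
    intro x
    rw [← Complex.exp_add, show l * ↑x + -l * ↑x = 0 by ring, Complex.exp_zero]
  have hsq : ∀ x : ℝ, Complex.exp (2 * l * x) = Complex.exp (l * x) * Complex.exp (l * x) := by
    intro x
    rw [← Complex.exp_add]
    congr 1
    ring
  have hsqm : ∀ x : ℝ,
      Complex.exp (-(2 * l) * x) = Complex.exp (-l * x) * Complex.exp (-l * x) := by
    intro x
    rw [← Complex.exp_add]
    congr 1
    ring
  -- transport functions for the eigenfunction φ₀
  have hder1 : ∀ x : ℝ,
      HasDerivAt (fun ω : ℝ => (deriv φ₀ ω - l * φ₀ ω) * Complex.exp (l * ω))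
        ((deriv (deriv φ₀) x - l * deriv φ₀ x) * Complex.exp (l * x)
          + (deriv φ₀ x - l * φ₀ x) * (l * Complex.exp (l * x))) x := fun x =>
    (((hd2 x).hasDerivAt).sub (((hd1 x).hasDerivAt).const_mul l)).mul (hasDerivAt_cexp_mul' l x)
  have hder2 : ∀ x : ℝ,
      HasDerivAt (fun ω : ℝ => (deriv φ₀ ω + l * φ₀ ω) * Complex.exp (-l * ω))
        ((deriv (deriv φ₀) x + l * deriv φ₀ x) * Complex.exp (-l * x)
          + (deriv φ₀ x + l * φ₀ x) * (-l * Complex.exp (-l * x))) x := fun x =>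
    (((hd2 x).hasDerivAt).add (((hd1 x).hasDerivAt).const_mul l)).mul (hasDerivAt_cexp_mul' (-l) x)
  have key1 := const_on_pi' (fun x => (hder1 x).differentiableAt) (fun x hx => by
    rw [(hder1 x).deriv]
    have h := hode x hx
    linear_combination Complex.exp (l * (x : ℂ)) * h)
  have key2 := const_on_pi' (fun x => (hder2 x).differentiableAt) (fun x hx => by
    rw [(hder2 x).deriv]
    have h := hode x hx
    linear_combination Complex.exp (-l * (x : ℂ)) * h)
  simp only [Complex.ofReal_zero, mul_zero, Complex.exp_zero, mul_one] at key1 key2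
  have e1p := key1 _ memP
  have e1n := key1 _ memN
  have e2p := key2 _ memP
  have e2n := key2 _ memN
  rw [hEp] at e1p
  rw [hEn] at e1n
  rw [hEmp] at e2p
  rw [hEmn] at e2n
  -- φ₀ at the endpoints
  have haP : φ₀ (π / 2) = ε * φ₀ 0 := by
    apply mul_left_cancel₀ h2l
    linear_combination ε * e2p - ε * e1p - 2 * l * φ₀ (π / 2) * hεε
  have haN : φ₀ (-(π / 2)) = ε * φ₀ 0 := by
    apply mul_left_cancel₀ h2l
    linear_combination ε * e2n - ε * e1n - 2 * l * φ₀ (-(π / 2)) * hεε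
  -- the boundary coefficient is nonzero
  have hbC : (2 * ε + (b₁ : ℂ) + (b₂ : ℂ)) ≠ 0 := by
    rw [hεdef]
    intro h
    have h2 : ((2 * (-1 : ℝ) ^ k + b₁ + b₂ : ℝ) : ℂ) = 0 := by
      push_cast
      linear_combination h
    rw [Complex.ofReal_eq_zero] at h2
    apply hb
    have hm : (-1 : ℝ) ^ (k + 1) = -(-1 : ℝ) ^ k := by
      rw [zpow_add₀ (by norm_num : (-1 : ℝ) ≠ 0) k 1]
      ring
    rw [hm]
    linarith
  have ha0 : φ₀ 0 = 0 := by
    have hsum : (2 * ε + (b₁ : ℂ) + (b₂ : ℂ)) * φ₀ 0 = 0 := by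
      linear_combination hbc1 + hbc2 - haN - haP
    exact (mul_eq_zero.mp hsum).resolve_left hbC
  -- representation of φ₀ on the interval
  have rep : ∀ x ∈ Icc (-(π / 2)) (π / 2),
      2 * l * φ₀ x = deriv φ₀ 0 * (Complex.exp (l * x) - Complex.exp (-l * x)) := by
    intro x hx
    have hA := key2 x hx
    have hB := key1 x hx
    linear_combination Complex.exp (l * (x : ℂ)) * hA - Complex.exp (-l * (x : ℂ)) * hB
      - 2 * l * φ₀ x * hprod x + l * (Complex.exp (l * (x : ℂ)) + Complex.exp (-l * (x : ℂ))) * ha0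
  -- transport functions for the associated function φ
  have hgder1 : ∀ x : ℝ,
      HasDerivAt (fun ω : ℝ => 2 * l * (deriv φ ω - l * φ ω) * Complex.exp (l * ω)
          - deriv φ₀ 0 * Complex.exp (2 * l * ω) + 2 * l * deriv φ₀ 0 * ω)
        ((2 * l * (deriv (deriv φ) x - l * deriv φ x)) * Complex.exp (l * x)
          + (2 * l * (deriv φ x - l * φ x)) * (l * Complex.exp (l * x))
          - deriv φ₀ 0 * (2 * l * Complex.exp (2 * l * x)) + 2 * l * deriv φ₀ 0) x := fun x =>
    ((((((hD2 x).hasDerivAt).sub (((hD1 x).hasDerivAt).const_mul l)).const_mul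
        (2 * l)).mul (hasDerivAt_cexp_mul' l x)).sub
      ((hasDerivAt_cexp_mul' (2 * l) x).const_mul (deriv φ₀ 0))).add
        (hasDerivAt_const_mul_ofReal' (2 * l * deriv φ₀ 0) x)
  have hgder2 : ∀ x : ℝ,
      HasDerivAt (fun ω : ℝ => 2 * l * (deriv φ ω + l * φ ω) * Complex.exp (-l * ω)
          - 2 * l * deriv φ₀ 0 * ω - deriv φ₀ 0 * Complex.exp (-(2 * l) * ω))
        ((2 * l * (deriv (deriv φ) x + l * deriv φ x)) * Complex.exp (-l * x)
          + (2 * l * (deriv φ x + l * φ x)) * (-l * Complex.exp (-l * x))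
          - 2 * l * deriv φ₀ 0 - deriv φ₀ 0 * (-(2 * l) * Complex.exp (-(2 * l) * x))) x := fun x =>
    ((((((hD2 x).hasDerivAt).add (((hD1 x).hasDerivAt).const_mul l)).const_mul
        (2 * l)).mul (hasDerivAt_cexp_mul' (-l) x)).sub
      (hasDerivAt_const_mul_ofReal' (2 * l * deriv φ₀ 0) x)).sub
        ((hasDerivAt_cexp_mul' (-(2 * l)) x).const_mul (deriv φ₀ 0))
  have keyG1 := const_on_pi' (fun x => (hgder1 x).differentiableAt) (fun x hx => by
    rw [(hgder1 x).deriv]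
    have h := hφode x hx
    have hrep := rep x hx
    linear_combination (2 * l * Complex.exp (l * (x : ℂ))) * h
      + (2 * l * Complex.exp (l * (x : ℂ))) * hrep
      - (2 * l * deriv φ₀ 0) * hsq x - (2 * l * deriv φ₀ 0) * hprod x)
  have keyG2 := const_on_pi' (fun x => (hgder2 x).differentiableAt) (fun x hx => by
    rw [(hgder2 x).deriv]
    have h := hφode x hx
    have hrep := rep x hx
    linear_combination (2 * l * Complex.exp (-l * (x : ℂ))) * h
      + (2 * l * Complex.exp (-l * (x : ℂ))) * hrep
      + (2 * l * deriv φ₀ 0) * hsqm x + (2 * l * deriv φ₀ 0) * hprod x)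
  simp only [Complex.ofReal_zero, mul_zero, Complex.exp_zero, mul_one] at keyG1 keyG2
  have E1 := keyG1 _ memP
  have E2 := keyG1 _ memN
  have E3 := keyG2 _ memP
  have E4 := keyG2 _ memN
  rw [hEp, h2Ep] at E1
  rw [hEn, h2En] at E2
  rw [hEmp, h2Emp] at E3
  rw [hEmn, h2Emn] at E4
  simp only [Complex.ofReal_neg, mul_one] at E1 E2 E3 E4
  -- endpoint values of φ
  have h4l : (4 : ℂ) * l ≠ 0 := mul_ne_zero (by norm_num) hl0
  have hstep1 : l * φ (π / 2) = ε * (l * φ 0 + deriv φ₀ 0 * ((π / 2 : ℝ) : ℂ)) := by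
    apply mul_left_cancel₀ h4l
    linear_combination ε * E3 - ε * E1 - 4 * l ^ 2 * φ (π / 2) * hεε
  have hstep2 : l * φ (-(π / 2)) = ε * (l * φ 0 - deriv φ₀ 0 * ((π / 2 : ℝ) : ℂ)) := by
    apply mul_left_cancel₀ h4l
    linear_combination ε * E4 - ε * E2 - 4 * l ^ 2 * φ (-(π / 2)) * hεε
  have hsum2 : (2 * ε + (b₁ : ℂ) + (b₂ : ℂ)) * (l * φ 0) = 0 := by
    linear_combination l * hφbc1 + l * hφbc2 - hstep1 - hstep2
  have hA0 : φ 0 = 0 := by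
    have h := (mul_eq_zero.mp hsum2).resolve_left hbC
    exact (mul_eq_zero.mp h).resolve_left hl0
  have hq0 : ((π / 2 : ℝ) : ℂ) ≠ 0 := Complex.ofReal_ne_zero.mpr hπ.ne'
  have hd00 : deriv φ₀ 0 = 0 := by
    have h1 : ε * (deriv φ₀ 0 * ((π / 2 : ℝ) : ℂ)) = 0 := by
      linear_combination l * hφbc2 - hstep1 - (ε * l + l * (b₂ : ℂ)) * hA0
    rcases mul_eq_zero.mp h1 with h | h
    · exact absurd h hε0
    · rcases mul_eq_zero.mp h with h | h
      · exact h
      · exact absurd h hq0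
  obtain ⟨ω, hω, hωne⟩ := hne
  apply hωne
  have hr := rep ω hω
  rw [hd00, zero_mul] at hr
  exact (mul_eq_zero.mp hr).resolve_left h2l
end

section
/- Let b₁ ∈ ℝ, set b₂ = −b₁, let k ∈ ℤ and set λ = (2k+1)·i. Then for every twice differentiable φ⁰ : ℝ → ℂ, not identically zero on [−π/2, π/2], satisfying (φ⁰)''(ω) = λ²·φ⁰(ω) on [−π/2, π/2] together with φ⁰(−π/2) + b₁·φ⁰(0) = 0 and φ⁰(π/2) − b₁·φ⁰(0) = 0, there exists NO twice differentiable φ : ℝ → ℂ with φ''(ω) − λ²·φ(ω) = 2λ·φ⁰(ω) for all ω ∈ [−π/2, π/2] and φ(−π/2) + b₁·φ(0) = 0, φ(π/2) − b₁·φ(0) = 0. (That is, the eigenvalue λ = (2k+1)i of NP(π/2, b₁, −b₁) has no associated vectors.) -/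
open Real Set

lemma myConstOn {f : ℝ → ℂ} {a b : ℝ} (hab : a ≤ b)
    (h : ∀ x ∈ Icc a b, HasDerivAt f 0 x) : f b = f a := by
  have hb := norm_image_sub_le_of_norm_deriv_le_segment' (f' := fun _ => (0 : ℂ))
    (fun x hx => (h x hx).hasDerivWithinAt) (C := 0) (fun x _ => by simp) b
    (right_mem_Icc.2 hab)
  have h1 : ‖f b - f a‖ ≤ 0 := by simpa using hb
  have h2 := le_antisymm h1 (norm_nonneg _)
  rwa [norm_eq_zero, sub_eq_zero] at h2

lemma myConstOn' {f : ℝ → ℂ} {a b : ℝ}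
    (h : ∀ x ∈ Icc a b, HasDerivAt f 0 x) :
    ∀ x ∈ Icc a b, ∀ y ∈ Icc a b, f x = f y := by
  intro x hx y hy
  rcases le_total x y with hxy | hxy
  · exact (myConstOn hxy (fun z hz => h z (Icc_subset_Icc hx.1 hy.2 hz))).symm
  · exact myConstOn hxy (fun z hz => h z (Icc_subset_Icc hy.1 hx.2 hz))

lemma hasDerivAt_ccos (m : ℂ) (x : ℝ) :
    HasDerivAt (fun ω : ℝ => Complex.cos (m * ω)) (-(m * Complex.sin (m * x))) x := by
  have h1 : HasDerivAt (fun z : ℂ => m * z) m (x : ℂ) := by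
    simpa using (hasDerivAt_id (x : ℂ)).const_mul m
  have h : HasDerivAt (fun z : ℂ => Complex.cos (m * z)) (-Complex.sin (m * x) * m) (x : ℂ) := by
    exact h1.ccos
  have h2 := h.comp_ofReal
  convert h2 using 1
  ring

lemma hasDerivAt_csin (m : ℂ) (x : ℝ) :
    HasDerivAt (fun ω : ℝ => Complex.sin (m * ω)) (m * Complex.cos (m * x)) x := by
  have h1 : HasDerivAt (fun z : ℂ => m * z) m (x : ℂ) := by
    simpa using (hasDerivAt_id (x : ℂ)).const_mul m
  have h : HasDerivAt (fun z : ℂ => Complex.sin (m * z)) (Complex.cos (m * x) * m) (x : ℂ) := by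
    exact h1.csin
  have h2 := h.comp_ofReal
  convert h2 using 1
  ring

theorem no_associated_vector_odd_case (b₁ : ℝ) (k : ℤ) :
    ∀ φ₀ : ℝ → ℂ,
      Differentiable ℝ φ₀ → Differentiable ℝ (deriv φ₀) →
      (∃ ω ∈ Icc (-(π / 2)) (π / 2), φ₀ ω ≠ 0) →
      (∀ ω ∈ Icc (-(π / 2)) (π / 2),
        deriv (deriv φ₀) ω = ((2 * (k : ℂ) + 1) * Complex.I) ^ 2 * φ₀ ω) →
      φ₀ (-(π / 2)) + (b₁ : ℂ) * φ₀ 0 = 0 →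
      φ₀ (π / 2) - (b₁ : ℂ) * φ₀ 0 = 0 →
      ¬ ∃ φ : ℝ → ℂ,
          Differentiable ℝ φ ∧ Differentiable ℝ (deriv φ) ∧
          (∀ ω ∈ Icc (-(π / 2)) (π / 2),
            deriv (deriv φ) ω - ((2 * (k : ℂ) + 1) * Complex.I) ^ 2 * φ ω
              = 2 * ((2 * (k : ℂ) + 1) * Complex.I) * φ₀ ω) ∧
          φ (-(π / 2)) + (b₁ : ℂ) * φ 0 = 0 ∧
          φ (π / 2) - (b₁ : ℂ) * φ 0 = 0 := by
  intro φ₀ hd0 hd0' hne hODE0 hbc01 hbc02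
  rintro ⟨φ, hd, hd', hODE, hbc1, hbc2⟩
  set m : ℂ := 2 * (k : ℂ) + 1 with hm_def
  set A : ℂ := φ₀ 0 with hA_def
  set D : ℂ := deriv φ₀ 0 with hD_def
  have hm : m ≠ 0 := by
    rw [hm_def]
    intro h
    have h2 : ((2 * k + 1 : ℤ) : ℂ) = 0 := by push_cast; linear_combination h
    have h3 : (2 * k + 1 : ℤ) = 0 := by exact_mod_cast h2
    omega
  set χ : ℝ → ℂ := fun ω => Complex.cos (m * ω) with hχdef
  set σ : ℝ → ℂ := fun ω => Complex.sin (m * ω) with hσdef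
  have hχ' : ∀ x : ℝ, HasDerivAt χ (-(m * σ x)) x := fun x => hasDerivAt_ccos m x
  have hσ' : ∀ x : ℝ, HasDerivAt σ (m * χ x) x := fun x => hasDerivAt_csin m x
  have pyth : ∀ x : ℝ, σ x ^ 2 + χ x ^ 2 = 1 := fun x => Complex.sin_sq_add_cos_sq _
  have hab : -(π / 2) ≤ π / 2 := by linarith [Real.pi_pos]
  have h0mem : (0 : ℝ) ∈ Icc (-(π / 2)) (π / 2) :=
    ⟨by linarith [Real.pi_pos], by linarith [Real.pi_pos]⟩
  have hpmem : (π / 2 : ℝ) ∈ Icc (-(π / 2)) (π / 2) := right_mem_Icc.2 hab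
  -- values of χ and σ at the relevant points
  have hmulp : m * ((π / 2 : ℝ) : ℂ) = (((k : ℝ) * π + π / 2 : ℝ) : ℂ) := by
    rw [hm_def]; push_cast; ring
  have hmulm : m * ((-(π / 2) : ℝ) : ℂ) = ((-((k : ℝ) * π + π / 2) : ℝ) : ℂ) := by
    rw [hm_def]; push_cast; ring
  set s : ℝ := Real.cos ((k : ℝ) * π) with hsdef
  have hsin0 : Real.sin ((k : ℝ) * π) = 0 := Real.sin_int_mul_pi k
  have hcosval : Real.cos ((k : ℝ) * π + π / 2) = 0 := by
    rw [Real.cos_add_pi_div_two, hsin0, neg_zero]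
  have hsinval : Real.sin ((k : ℝ) * π + π / 2) = s := by
    rw [Real.sin_add_pi_div_two]
  have hχp : χ (π / 2) = 0 := by
    rw [hχdef]
    show Complex.cos (m * ((π / 2 : ℝ) : ℂ)) = 0
    rw [hmulp, ← Complex.ofReal_cos, hcosval, Complex.ofReal_zero]
  have hχm : χ (-(π / 2)) = 0 := by
    rw [hχdef]
    show Complex.cos (m * ((-(π / 2) : ℝ) : ℂ)) = 0
    rw [hmulm, ← Complex.ofReal_cos, Real.cos_neg, hcosval, Complex.ofReal_zero]
  have hσp : σ (π / 2) = (s : ℂ) := by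
    rw [hσdef]
    show Complex.sin (m * ((π / 2 : ℝ) : ℂ)) = (s : ℂ)
    rw [hmulp, ← Complex.ofReal_sin, hsinval]
  have hσm : σ (-(π / 2)) = -(s : ℂ) := by
    rw [hσdef]
    show Complex.sin (m * ((-(π / 2) : ℝ) : ℂ)) = -(s : ℂ)
    rw [hmulm, ← Complex.ofReal_sin, Real.sin_neg, hsinval, Complex.ofReal_neg]
  have hχ0 : χ 0 = 1 := by
    rw [hχdef]
    show Complex.cos (m * ((0 : ℝ) : ℂ)) = 1
    simp
  have hσ0 : σ 0 = 0 := by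
    rw [hσdef]
    show Complex.sin (m * ((0 : ℝ) : ℂ)) = 0
    simp
  have hs2 : (s : ℂ) ^ 2 = 1 := by
    have h1 := Real.sin_sq_add_cos_sq ((k : ℝ) * π)
    rw [hsin0, ← hsdef] at h1
    have h2 : s ^ 2 = 1 := by nlinarith [h1]
    exact_mod_cast h2
  -- the eigenvalue relation
  have hl2 : (m * Complex.I) ^ 2 = -m ^ 2 := by
    linear_combination m ^ 2 * Complex.I_sq
  have hODE0' : ∀ x ∈ Icc (-(π / 2)) (π / 2),
      deriv (deriv φ₀) x = -m ^ 2 * φ₀ x := by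
    intro x hx
    rw [hODE0 x hx, hl2]
  have hODE' : ∀ x ∈ Icc (-(π / 2)) (π / 2),
      deriv (deriv φ) x = -m ^ 2 * φ x + 2 * (m * Complex.I) * φ₀ x := by
    intro x hx
    have h := hODE x hx
    linear_combination h + φ x * hl2
  -- two conserved Wronskians for φ₀
  have key1 : ∀ x ∈ Icc (-(π / 2)) (π / 2), ∀ y ∈ Icc (-(π / 2)) (π / 2),
      deriv φ₀ x * χ x + m * (φ₀ x * σ x) = deriv φ₀ y * χ y + m * (φ₀ y * σ y) := by
    apply myConstOn' (f := fun ω => deriv φ₀ ω * χ ω + m * (φ₀ ω * σ ω))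
    intro x hx
    have h1 := ((hd0' x).hasDerivAt.mul (hχ' x)).add
      (((hd0 x).hasDerivAt.mul (hσ' x)).const_mul m)
    convert h1 using 1
    · rfl
    · rfl
    rw [hODE0' x hx]
    ring
  have key2 : ∀ x ∈ Icc (-(π / 2)) (π / 2), ∀ y ∈ Icc (-(π / 2)) (π / 2),
      deriv φ₀ x * σ x - m * (φ₀ x * χ x) = deriv φ₀ y * σ y - m * (φ₀ y * χ y) := by
    apply myConstOn' (f := fun ω => deriv φ₀ ω * σ ω - m * (φ₀ ω * χ ω))
    intro x hx
    have h1 := ((hd0' x).hasDerivAt.mul (hσ' x)).sub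
      (((hd0 x).hasDerivAt.mul (hχ' x)).const_mul m)
    convert h1 using 1
    · rfl
    · rfl
    rw [hODE0' x hx]
    ring
  -- representation of φ₀
  have rep : ∀ x ∈ Icc (-(π / 2)) (π / 2), m * φ₀ x = D * σ x + m * A * χ x := by
    intro x hx
    have e1 := key1 x hx 0 h0mem
    have e2 := key2 x hx 0 h0mem
    rw [hχ0, hσ0, ← hA_def, ← hD_def] at e1 e2
    linear_combination σ x * e1 - χ x * e2 - m * φ₀ x * pyth x
  have hAp := rep (π / 2) hpmem
  rw [hχp, hσp] at hAp
  set Cc : ℂ := (b₁ : ℂ) * A * (s : ℂ) with hCc_def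
  have hD : D = m * Cc := by
    rw [hCc_def]
    linear_combination (-(s : ℂ)) * hAp + m * (s : ℂ) * hbc02 - D * hs2
  have hA0 : A ≠ 0 := by
    intro h
    obtain ⟨ω, hω, hωne⟩ := hne
    apply hωne
    have hx := rep ω hω
    rw [hD, hCc_def, h] at hx
    have h2 : m * φ₀ ω = m * 0 := by rw [hx]; ring
    simpa using mul_left_cancel₀ hm h2
  have rep' : ∀ x ∈ Icc (-(π / 2)) (π / 2), φ₀ x = A * χ x + Cc * σ x := by
    intro x hx
    have h2 : m * φ₀ x = m * (A * χ x + Cc * σ x) := by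
      rw [rep x hx, hD]; ring
    exact mul_left_cancel₀ hm h2
  -- the conserved quantity for the associated function φ
  set F : ℝ → ℂ := fun ω => 2 * m * (deriv φ ω * χ ω + m * (φ ω * σ ω))
      - 2 * (m * Complex.I) * (A * (m * (ω : ℂ) + σ ω * χ ω) + Cc * (σ ω * σ ω)) with hFdef
  have hF : ∀ x ∈ Icc (-(π / 2)) (π / 2), HasDerivAt F 0 x := by
    intro x hx
    have hV := (((hd' x).hasDerivAt.mul (hχ' x)).add
      (((hd x).hasDerivAt.mul (hσ' x)).const_mul m)).const_mul (2 * m)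
    have hid : HasDerivAt (fun ω : ℝ => (ω : ℂ)) 1 x := by
      simpa using (hasDerivAt_id x).ofReal_comp
    have hlin : HasDerivAt (fun ω : ℝ => m * (ω : ℂ)) (m * 1) x := hid.const_mul m
    have hG1 := hlin.add ((hσ' x).mul (hχ' x))
    have hG2 := (hσ' x).mul (hσ' x)
    have hG := (hG1.const_mul A).add (hG2.const_mul Cc)
    have hsum := hV.sub (hG.const_mul (2 * (m * Complex.I)))
    rw [hFdef]
    convert hsum using 1
    · rfl
    · rfl
    rw [hODE' x hx, rep' x hx]
    linear_combination (-(2 : ℂ)) * m ^ 2 * Complex.I * A * pyth x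
  have hcon := myConstOn hab hF
  rw [hFdef] at hcon
  simp only [hχp, hχm, hσp, hσm] at hcon
  have hkey : m ^ 2 * Complex.I * A * ((π : ℝ) : ℂ) = 0 := by
    push_cast at hcon ⊢
    linear_combination (-(1 : ℂ) / 2) * hcon + m ^ 2 * (s : ℂ) * hbc1
      + m ^ 2 * (s : ℂ) * hbc2
  have hne0 : m ^ 2 * Complex.I * A * ((π : ℝ) : ℂ) ≠ 0 := by
    refine mul_ne_zero (mul_ne_zero (mul_ne_zero (pow_ne_zero 2 hm)
      Complex.I_ne_zero) hA0) ?_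
    simpa using Real.pi_ne_zero
  exact hne0 hkey
end

section
/- Let l ≥ 2 be an even integer and let b ∈ ℝ. In ℝ^{l+2}, with standard basis vectors e₁, …, e_{l+2}, the l + 1 vectors e₁ + b·e_{l+2} and e_{j+1} + e_{j+3} for j = 0, 1, …, l − 1 are linearly independent. -/
/-- The family of `l + 1` vectors `e₁ + b·e_{l+2}` and `e_{j+1} + e_{j+3}` (`j = 0, …, l−1`)
in `ℝ^{l+2}` (standard basis indexed from `0`). -/
def vecFamily (l : ℕ) (b : ℝ) : Fin (l + 1) → (Fin (l + 2) → ℝ) := fun j =>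
  if (j : ℕ) = 0 then
    (Pi.single (0 : Fin (l + 2)) (1 : ℝ) : Fin (l + 2) → ℝ)
      + b • (Pi.single (Fin.last (l + 1)) (1 : ℝ) : Fin (l + 2) → ℝ)
  else
    (Pi.single (⟨(j : ℕ) - 1, by have := j.isLt; omega⟩ : Fin (l + 2)) (1 : ℝ) : Fin (l + 2) → ℝ)
      + (Pi.single (⟨(j : ℕ) + 1, by have := j.isLt; omega⟩ : Fin (l + 2)) (1 : ℝ) : Fin (l + 2) → ℝ)

theorem linearIndependent_even_case (l : ℕ) (hl : 2 ≤ l) (hle : Even l) (b : ℝ) :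
    LinearIndependent ℝ (vecFamily l b) := by
  rw [Fintype.linearIndependent_iff]
  intro g hg
  obtain ⟨p, hp⟩ := hle
  set G : ℕ → ℝ := fun n => if h : n < l + 1 then g ⟨n, h⟩ else 0 with hGdef
  have hGg : ∀ j : Fin (l + 1), G (j : ℕ) = g j := by
    intro j
    simp [hGdef, j.isLt]; intro h; have := j.isLt; omega
  have vf : ∀ (j : Fin (l + 1)) (i : Fin (l + 2)),
      vecFamily l b j i =
        if (j : ℕ) = 0 then
          (if (i : ℕ) = 0 then (1 : ℝ) else 0) + b * (if (i : ℕ) = l + 1 then 1 else 0)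
        else (if (i : ℕ) = (j : ℕ) - 1 then (1 : ℝ) else 0)
          + (if (i : ℕ) = (j : ℕ) + 1 then 1 else 0) := by
    intro j i
    unfold vecFamily
    by_cases hj : (j : ℕ) = 0
    · simp only [hj, if_true, Pi.add_apply, Pi.smul_apply, smul_eq_mul, Pi.single_apply, Fin.ext_iff, Fin.val_last, Fin.val_zero]
    · simp [hj, Pi.single_apply, Fin.ext_iff]
  have key : ∀ i : ℕ, i < l + 2 →
      G 0 * ((if i = 0 then (1 : ℝ) else 0) + b * (if i = l + 1 then 1 else 0))
      + (if i + 1 ∈ Finset.Ico 1 (l + 1) then G (i + 1) else 0)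
      + (if i - 1 ∈ Finset.Ico 1 (l + 1) then G (i - 1) else 0) = 0 := by
    intro i hi
    have h0 : ∑ j : Fin (l + 1), G (j : ℕ) * vecFamily l b j ⟨i, hi⟩ = 0 := by
      have h := congrFun hg (⟨i, hi⟩ : Fin (l + 2))
      simp only [Finset.sum_apply, Pi.smul_apply, smul_eq_mul, Pi.zero_apply] at h
      calc ∑ j : Fin (l + 1), G (j : ℕ) * vecFamily l b j ⟨i, hi⟩
          = ∑ j : Fin (l + 1), g j * vecFamily l b j ⟨i, hi⟩ :=
            Finset.sum_congr rfl fun j _ => by rw [hGg]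
        _ = 0 := h
    simp_rw [vf] at h0
    have h1 : ∑ n ∈ Finset.range (l + 1),
        G n * (if n = 0 then
            (if i = 0 then (1 : ℝ) else 0) + b * (if i = l + 1 then 1 else 0)
          else (if i = n - 1 then (1 : ℝ) else 0) + (if i = n + 1 then 1 else 0)) = 0 := by
      rw [← Fin.sum_univ_eq_sum_range]
      exact h0
    rw [Finset.range_eq_Ico, Finset.sum_eq_sum_Ico_succ_bot (by omega)] at h1
    rw [if_pos rfl] at h1
    have h2 : ∑ n ∈ Finset.Ico 1 (l + 1),
        G n * (if n = 0 then
            (if i = 0 then (1 : ℝ) else 0) + b * (if i = l + 1 then 1 else 0)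
          else (if i = n - 1 then (1 : ℝ) else 0) + (if i = n + 1 then 1 else 0))
        = (if i + 1 ∈ Finset.Ico 1 (l + 1) then G (i + 1) else 0)
          + (if i - 1 ∈ Finset.Ico 1 (l + 1) then G (i - 1) else 0) := by
      rw [← Finset.sum_ite_eq' (Finset.Ico 1 (l + 1)) (i + 1) (fun n => G n),
          ← Finset.sum_ite_eq' (Finset.Ico 1 (l + 1)) (i - 1) (fun n => G n),
          ← Finset.sum_add_distrib]
      refine Finset.sum_congr rfl fun n hn => ?_
      simp only [Finset.mem_Ico] at hn
      split_ifs <;> first | omega | ring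
    rw [h2] at h1
    linarith [h1]
  have erec : ∀ k : ℕ, 2 ≤ k → k ≤ l - 1 → G (k + 1) + G (k - 1) = 0 := by
    intro k h2k hkl
    have h := key k (by omega)
    rw [if_neg (by omega), if_neg (by omega),
        if_pos (Finset.mem_Ico.mpr ⟨by omega, by omega⟩),
        if_pos (Finset.mem_Ico.mpr ⟨by omega, by omega⟩)] at h
    simpa using h
  have etop : G (l - 1) = 0 := by
    have h := key l (by omega)
    rw [if_neg (by omega), if_neg (by omega),
        if_neg (fun hc => by rw [Finset.mem_Ico] at hc; omega),
        if_pos (Finset.mem_Ico.mpr ⟨by omega, by omega⟩)] at h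
    simpa using h
  have e1 : G 2 = 0 := by
    have h := key 1 (by omega)
    rw [if_neg (by omega), if_neg (by omega),
        if_pos (Finset.mem_Ico.mpr ⟨by omega, by omega⟩),
        if_neg (fun hc => by rw [Finset.mem_Ico] at hc; omega)] at h
    simpa using h
  have e0 : G 0 + G 1 = 0 := by
    have h := key 0 (by omega)
    rw [if_pos rfl, if_neg (by omega),
        if_pos (Finset.mem_Ico.mpr ⟨by omega, by omega⟩),
        if_neg (fun hc => by rw [Finset.mem_Ico] at hc; omega)] at h
    simpa using h
  have odd0 : ∀ k : ℕ, 2 * k ≤ l - 2 → G (l - 1 - 2 * k) = 0 := by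
    intro k
    induction k with
    | zero => intro _; simpa using etop
    | succ k ih =>
      intro hk
      have h1 := ih (by omega)
      have h2 := erec (l - 2 - 2 * k) (by omega) (by omega)
      rw [show l - 2 - 2 * k + 1 = l - 1 - 2 * k by omega,
          show l - 2 - 2 * k - 1 = l - 1 - 2 * (k + 1) by omega, h1] at h2
      linarith
  have even0 : ∀ k : ℕ, 2 * k + 2 ≤ l → G (2 * k + 2) = 0 := by
    intro k
    induction k with
    | zero => intro _; simpa using e1
    | succ k ih =>
      intro hk
      have h1 := ih (by omega)
      have h2 := erec (2 * k + 3) (by omega) (by omega)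
      rw [show 2 * k + 3 + 1 = 2 * (k + 1) + 2 by omega,
          show 2 * k + 3 - 1 = 2 * k + 2 by omega, h1] at h2
      linarith
  have g1 : G 1 = 0 := by
    have h := odd0 (p - 1) (by omega)
    rwa [show l - 1 - 2 * (p - 1) = 1 by omega] at h
  have g0 : G 0 = 0 := by linarith
  intro j
  rw [← hGg j]
  have hjl : (j : ℕ) < l + 1 := j.isLt
  rcases Nat.even_or_odd (j : ℕ) with he | ho
  · obtain ⟨m, hm2⟩ := he
    rcases Nat.eq_zero_or_pos m with hm0 | hm0
    · rw [show (j : ℕ) = 0 by omega]; exact g0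
    · have h := even0 (m - 1) (by omega)
      rwa [show 2 * (m - 1) + 2 = (j : ℕ) by omega] at h
  · obtain ⟨m, hm2⟩ := ho
    have h := odd0 (p - 1 - m) (by omega)
    rwa [show l - 1 - 2 * (p - 1 - m) = (j : ℕ) by omega] at h
end

section
/- Let l ≥ 1 be an odd integer and b ∈ ℝ. In ℝ^{l+2}, with standard basis vectors e₁, …, e_{l+2}, the l + 1 vectors e₁ + b·e_{l+2} and e_{j+1} + e_{j+3} for j = 0, 1, …, l − 1 are linearly independent if and only if b ≠ (−1)^{(l−1)/2}. -/
/-- Extension by zero of a coefficient family. -/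
def cExt (l : ℕ) (c : Fin (l + 1) → ℝ) (n : ℕ) : ℝ :=
  if h : n < l + 1 then c ⟨n, h⟩ else 0

/-- The explicit dependence coefficients in the degenerate case. -/
def depFun (l : ℕ) (n : ℕ) : ℝ :=
  if n = 0 then -1 else if Odd n ∧ n ≤ l then (-1 : ℝ) ^ ((n - 1) / 2) else 0

lemma sum_ind (l : ℕ) (c : Fin (l + 1) → ℝ) (m : ℕ) :
    (∑ j : Fin (l + 1), if (j : ℕ) = m then c j else 0) = cExt l c m := by
  unfold cExt
  rcases lt_or_ge m (l + 1) with h | h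
  · rw [dif_pos h, Finset.sum_eq_single (⟨m, h⟩ : Fin (l + 1))]
    · simp
    · intro j _ hj
      rw [if_neg]
      intro hc
      exact hj (Fin.ext hc)
    · intro h'
      exact absurd (Finset.mem_univ _) h'
  · rw [dif_neg (by omega)]
    apply Finset.sum_eq_zero
    intro j _
    rw [if_neg]
    have := j.isLt
    omega

lemma master (l : ℕ) (b : ℝ) (c : Fin (l + 1) → ℝ) (k : Fin (l + 2)) :
    (∑ j : Fin (l + 1), c j • vecFamily l b j) k =
      (if (k : ℕ) = 0 then cExt l c 0 else 0)
      + (if (k : ℕ) = l + 1 then b * cExt l c 0 else 0)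
      + (if 2 ≤ (k : ℕ) then cExt l c ((k : ℕ) - 1) else 0)
      + cExt l c ((k : ℕ) + 1) := by
  rw [Finset.sum_apply]
  have hterm : ∀ j : Fin (l + 1), (c j • vecFamily l b j) k =
      (if (j : ℕ) = 0 ∧ (k : ℕ) = 0 then c j else 0)
      + (if (j : ℕ) = 0 ∧ (k : ℕ) = l + 1 then b * c j else 0)
      + (if (j : ℕ) = (k : ℕ) + 1 then c j else 0)
      + (if 2 ≤ (k : ℕ) ∧ (j : ℕ) = (k : ℕ) - 1 then c j else 0) := by
    intro j
    by_cases hj : (j : ℕ) = 0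
    · rw [Pi.smul_apply, vecFamily, if_pos hj]
      simp only [Pi.add_apply, Pi.smul_apply, Pi.single_apply, smul_eq_mul, Fin.ext_iff,
        Fin.val_zero, Fin.val_last]
      have hk2 := k.isLt
      split_ifs <;> first | ring1 | (exfalso; omega)
    · rw [Pi.smul_apply, vecFamily, if_neg hj]
      simp only [Pi.add_apply, Pi.single_apply, smul_eq_mul, Fin.ext_iff, Fin.val_mk]
      have hj1 := j.isLt
      have hk2 := k.isLt
      split_ifs <;> first | ring1 | (exfalso; omega)
  rw [Finset.sum_congr rfl (fun j _ => hterm j)]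
  rw [Finset.sum_add_distrib, Finset.sum_add_distrib, Finset.sum_add_distrib]
  have h1 : (∑ j : Fin (l + 1), if (j : ℕ) = 0 ∧ (k : ℕ) = 0 then c j else 0)
      = (if (k : ℕ) = 0 then cExt l c 0 else 0) := by
    by_cases hk : (k : ℕ) = 0
    · rw [if_pos hk, ← sum_ind l c 0]
      exact Finset.sum_congr rfl fun j _ => by simp [hk]
    · rw [if_neg hk]
      exact Finset.sum_eq_zero fun j _ => by simp [hk]
  have h2 : (∑ j : Fin (l + 1), if (j : ℕ) = 0 ∧ (k : ℕ) = l + 1 then b * c j else 0)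
      = (if (k : ℕ) = l + 1 then b * cExt l c 0 else 0) := by
    by_cases hk : (k : ℕ) = l + 1
    · rw [if_pos hk]
      have hb : b * cExt l c 0 = cExt l (fun j => b * c j) 0 := by simp [cExt]
      rw [hb, ← sum_ind l (fun j => b * c j) 0]
      exact Finset.sum_congr rfl fun j _ => by simp [hk]
    · rw [if_neg hk]
      exact Finset.sum_eq_zero fun j _ => by simp [hk]
  have h3 : (∑ j : Fin (l + 1), if (j : ℕ) = (k : ℕ) + 1 then c j else 0)
      = cExt l c ((k : ℕ) + 1) := sum_ind l c _
  have h4 : (∑ j : Fin (l + 1), if 2 ≤ (k : ℕ) ∧ (j : ℕ) = (k : ℕ) - 1 then c j else 0)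
      = (if 2 ≤ (k : ℕ) then cExt l c ((k : ℕ) - 1) else 0) := by
    by_cases hk : 2 ≤ (k : ℕ)
    · rw [if_pos hk, ← sum_ind l c ((k : ℕ) - 1)]
      exact Finset.sum_congr rfl fun j _ => by simp [hk]
    · rw [if_neg hk]
      exact Finset.sum_eq_zero fun j _ => by simp [hk]
  rw [h1, h2, h3, h4]
  ring

theorem linearIndependent_odd_case_iff (l : ℕ) (hl : 1 ≤ l) (hlo : Odd l) (b : ℝ) :
    LinearIndependent ℝ (vecFamily l b) ↔ b ≠ (-1 : ℝ) ^ ((l - 1) / 2) := by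
  obtain ⟨m, hm⟩ := hlo
  have hm' : (l - 1) / 2 = m := by omega
  rw [hm']
  constructor
  · -- LI → b ≠ (-1)^m
    intro hLI hb
    set c : Fin (l + 1) → ℝ := fun j => depFun l (j : ℕ) with hc
    have hcd : ∀ n : ℕ, cExt l c n = depFun l n := by
      intro n
      unfold cExt
      split
      · rfl
      · unfold depFun
        rw [if_neg (by omega), if_neg (by omega)]
    have hd0 : depFun l 0 = -1 := by simp [depFun]
    have hdodd : ∀ i : ℕ, 2 * i + 1 ≤ l → depFun l (2 * i + 1) = (-1 : ℝ) ^ i := by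
      intro i hi
      unfold depFun
      rw [if_neg (by omega), if_pos ⟨⟨i, by omega⟩, hi⟩]
      congr 1
      omega
    have hdeven : ∀ n : ℕ, n ≠ 0 → Even n → depFun l n = 0 := by
      rintro n hn0 ⟨i, hi⟩
      unfold depFun
      rw [if_neg hn0, if_neg]
      rintro ⟨⟨j, hj⟩, _⟩
      omega
    have hsum : ∑ j : Fin (l + 1), c j • vecFamily l b j = 0 := by
      funext k
      rw [master, Pi.zero_apply, hcd, hcd, hcd]
      have hk2 := k.isLt
      rcases Nat.eq_zero_or_pos (k : ℕ) with hk0 | hk1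
      · rw [hk0]
        rw [if_pos rfl, if_neg (by omega), if_neg (by omega)]
        have h1 : depFun l 1 = 1 := by simpa using hdodd 0 (by omega)
        rw [hd0, h1]; ring
      · rcases Nat.lt_or_ge (k : ℕ) (l + 1) with hkl | hkl
        · rw [if_neg (by omega), if_neg (by omega)]
          by_cases h2k : 2 ≤ (k : ℕ)
          · rw [if_pos h2k]
            rcases Nat.even_or_odd (k : ℕ) with ⟨i, hi⟩ | ⟨i, hi⟩
            · obtain ⟨i', rfl⟩ : ∃ i', i = i' + 1 := ⟨i - 1, by omega⟩
              have hi1 : (k : ℕ) - 1 = 2 * i' + 1 := by omega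
              have hi2 : (k : ℕ) + 1 = 2 * (i' + 1) + 1 := by omega
              rw [hi1, hi2, hdodd i' (by omega), hdodd (i' + 1) (by omega), pow_succ]
              ring
            · rw [hdeven _ (by omega) ⟨i, by omega⟩, hdeven _ (by omega) ⟨i + 1, by omega⟩]
              ring
          · have hk1' : (k : ℕ) = 1 := by omega
            rw [if_neg h2k, hk1']
            have h2 : depFun l 2 = 0 := by
              rcases Nat.lt_or_ge l 2 with hl2 | hl2
              · unfold depFun
                rw [if_neg (by omega), if_neg (by omega)]
              · exact hdeven 2 (by omega) ⟨1, by omega⟩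
            rw [h2]; ring
        · have hktop : (k : ℕ) = l + 1 := by omega
          rw [hktop, if_neg (by omega), if_pos rfl, if_pos (by omega)]
          have h1 : l + 1 - 1 = 2 * m + 1 := by omega
          have h2 : depFun l (l + 1 + 1) = 0 := by
            unfold depFun
            rw [if_neg (by omega), if_neg (by omega)]
          rw [h1, hdodd m (by omega), h2, hd0, hb]
          ring
    have h0 := (Fintype.linearIndependent_iff.mp hLI) c hsum ⟨0, by omega⟩
    rw [hc] at h0
    simp [depFun] at h0
  · -- b ≠ (-1)^m → LI
    intro hb
    rw [Fintype.linearIndependent_iff]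
    intro c hsum
    set d : ℕ → ℝ := cExt l c with hd
    have hkeq : ∀ n : ℕ, n < l + 2 →
        (if n = 0 then d 0 else 0)
        + (if n = l + 1 then b * d 0 else 0)
        + (if 2 ≤ n then d (n - 1) else 0)
        + d (n + 1) = 0 := by
      intro n hn
      have h := (master l b c ⟨n, hn⟩).symm
      rw [hsum, Pi.zero_apply] at h
      exact h
    have hz : d (l + 1 + 1) = 0 := by
      rw [hd]; unfold cExt; rw [dif_neg (by omega)]
    have E0 : d 0 + d 1 = 0 := by
      have h := hkeq 0 (by omega)
      rw [if_pos rfl, if_neg (by omega), if_neg (by omega)] at h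
      linarith [h]
    have Emid : ∀ k : ℕ, 1 ≤ k → k ≤ l →
        (if 2 ≤ k then d (k - 1) else 0) + d (k + 1) = 0 := by
      intro k h1 h2
      have h := hkeq k (by omega)
      rw [if_neg (by omega), if_neg (by omega)] at h
      linarith [h]
    have Etop : b * d 0 + d l = 0 := by
      have h := hkeq (l + 1) (by omega)
      rw [if_neg (by omega), if_pos rfl, if_pos (by omega),
        show l + 1 - 1 = l from by omega, hz] at h
      linarith [h]
    have claimB : ∀ i : ℕ, 2 * i + 1 ≤ l → d (2 * i + 1) = (-1 : ℝ) ^ i * d 1 := by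
      intro i
      induction i with
      | zero => intro _; simp
      | succ i ih =>
        intro hi
        have hmid := Emid (2 * i + 2) (by omega) (by omega)
        rw [if_pos (by omega)] at hmid
        have e1 : 2 * i + 2 - 1 = 2 * i + 1 := by omega
        have e2 : 2 * i + 2 + 1 = 2 * (i + 1) + 1 := by omega
        rw [e1, e2, ih (by omega)] at hmid
        rw [pow_succ]
        linarith [hmid]
    have claimA : ∀ i : ℕ, 2 * i + 2 ≤ l + 1 → d (2 * i + 2) = 0 := by
      intro i
      induction i with
      | zero =>
        intro _
        have h := Emid 1 (by omega) (by omega)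
        rw [if_neg (by omega)] at h
        simpa using h
      | succ i ih =>
        intro hi
        have hmid := Emid (2 * i + 3) (by omega) (by omega)
        rw [if_pos (by omega)] at hmid
        have e1 : 2 * i + 3 - 1 = 2 * i + 2 := by omega
        have e2 : 2 * i + 3 + 1 = 2 * (i + 1) + 2 := by omega
        rw [e1, e2, ih (by omega)] at hmid
        linarith [hmid]
    have hd1 : d 1 = 0 := by
      have hdl : d l = (-1 : ℝ) ^ m * d 1 := by
        have h := claimB m (by omega)
        rwa [show 2 * m + 1 = l by omega] at h
      have hkey : ((-1 : ℝ) ^ m - b) * d 1 = 0 := by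
        linear_combination Etop - b * E0 - hdl
      rcases mul_eq_zero.mp hkey with h | h
      · exact absurd (by linarith [h] : b = (-1 : ℝ) ^ m) hb
      · exact h
    intro j
    have hj : c j = d (j : ℕ) := by
      rw [hd]; unfold cExt; rw [dif_pos j.isLt]
    rw [hj]
    have hjl : (j : ℕ) ≤ l := by have := j.isLt; omega
    rcases Nat.eq_zero_or_pos (j : ℕ) with h0 | hpos
    · rw [h0]; linarith [E0, hd1]
    · rcases Nat.even_or_odd (j : ℕ) with ⟨i, hi⟩ | ⟨i, hi⟩
      · have h := claimA (i - 1) (by omega)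
        rwa [show 2 * (i - 1) + 2 = (j : ℕ) by omega] at h
      · have h := claimB i (by omega)
        rwa [show 2 * i + 1 = (j : ℕ) by omega, hd1, mul_zero] at h
end

section
/- Let b₁, b₂ ∈ ℝ and λ ∈ ℂ with λ ≠ 0. Then λ is an eigenvalue of the nonlocal system NS(b₁, b₂) if and only if sinh(λπ)² = b₁·b₂·sinh(λπ/2)², equivalently sinh(λπ/2)² · (4·cosh(λπ/2)² − b₁·b₂) = 0. -/
open Real Set

/-- `lam` is an eigenvalue of the nonlocal system `NS(b₁, b₂)`. -/
def NSEigen (b₁ b₂ : ℝ) (lam : ℂ) : Prop :=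
  ∃ φ₁ φ₂ : ℝ → ℂ,
    Differentiable ℝ φ₁ ∧ Differentiable ℝ (deriv φ₁) ∧
    Differentiable ℝ φ₂ ∧ Differentiable ℝ (deriv φ₂) ∧
    ((∃ ω ∈ Icc (-(π / 2)) (π / 2), φ₁ ω ≠ 0) ∨ (∃ ω ∈ Icc (-(π / 2)) (π / 2), φ₂ ω ≠ 0)) ∧
    (∀ ω ∈ Icc (-(π / 2)) (π / 2), deriv (deriv φ₁) ω = lam ^ 2 * φ₁ ω) ∧
    (∀ ω ∈ Icc (-(π / 2)) (π / 2), deriv (deriv φ₂) ω = lam ^ 2 * φ₂ ω) ∧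
    φ₁ (-(π / 2)) = 0 ∧ φ₁ (π / 2) + (b₁ : ℂ) * φ₂ 0 = 0 ∧
    φ₂ (-(π / 2)) = 0 ∧ φ₂ (π / 2) + (b₂ : ℂ) * φ₁ 0 = 0

noncomputable section NSAux

/-- The basic solution `ω ↦ a * sinh (lam * (ω + π/2))`. -/
private def NSsol (lam a : ℂ) : ℝ → ℂ :=
  fun ω => a * Complex.sinh (lam * ((ω : ℂ) + ((π / 2 : ℝ) : ℂ)))

private lemma NS_hasDerivAt_sh (lam : ℂ) (ω : ℝ) :
    HasDerivAt (fun t : ℝ => Complex.sinh (lam * ((t : ℂ) + ((π / 2 : ℝ) : ℂ))))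
      (lam * Complex.cosh (lam * ((ω : ℂ) + ((π / 2 : ℝ) : ℂ)))) ω := by
  have h1 : HasDerivAt (fun t : ℝ => lam * ((t : ℂ) + ((π / 2 : ℝ) : ℂ))) lam ω := by
    simpa using ((Complex.ofRealCLM.hasDerivAt (x := ω)).add_const ((π / 2 : ℝ) : ℂ)).const_mul lam
  simpa [Function.comp_def, smul_eq_mul, mul_comm] using
    (Complex.hasDerivAt_sinh (lam * ((ω : ℂ) + ((π / 2 : ℝ) : ℂ)))).scomp ω h1

private lemma NS_hasDerivAt_ch (lam : ℂ) (ω : ℝ) :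
    HasDerivAt (fun t : ℝ => Complex.cosh (lam * ((t : ℂ) + ((π / 2 : ℝ) : ℂ))))
      (lam * Complex.sinh (lam * ((ω : ℂ) + ((π / 2 : ℝ) : ℂ)))) ω := by
  have h1 : HasDerivAt (fun t : ℝ => lam * ((t : ℂ) + ((π / 2 : ℝ) : ℂ))) lam ω := by
    simpa using ((Complex.ofRealCLM.hasDerivAt (x := ω)).add_const ((π / 2 : ℝ) : ℂ)).const_mul lam
  simpa [Function.comp_def, smul_eq_mul, mul_comm] using
    (Complex.hasDerivAt_cosh (lam * ((ω : ℂ) + ((π / 2 : ℝ) : ℂ)))).scomp ω h1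

private lemma NSsol_hasDerivAt (lam a : ℂ) (ω : ℝ) :
    HasDerivAt (NSsol lam a) (a * lam * Complex.cosh (lam * ((ω : ℂ) + ((π / 2 : ℝ) : ℂ)))) ω := by
  have h := (NS_hasDerivAt_sh lam ω).const_mul a
  rw [show a * (lam * Complex.cosh (lam * ((ω : ℂ) + ((π / 2 : ℝ) : ℂ))))
      = a * lam * Complex.cosh (lam * ((ω : ℂ) + ((π / 2 : ℝ) : ℂ))) from by ring] at h
  exact h

private lemma NSsol_deriv (lam a : ℂ) :
    deriv (NSsol lam a)
      = fun ω : ℝ => a * lam * Complex.cosh (lam * ((ω : ℂ) + ((π / 2 : ℝ) : ℂ))) := by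
  funext ω; exact (NSsol_hasDerivAt lam a ω).deriv

private lemma NSsol_diff (lam a : ℂ) : Differentiable ℝ (NSsol lam a) :=
  fun ω => (NSsol_hasDerivAt lam a ω).differentiableAt

private lemma NSsol_deriv_hasDerivAt (lam a : ℂ) (ω : ℝ) :
    HasDerivAt (deriv (NSsol lam a))
      (a * lam * (lam * Complex.sinh (lam * ((ω : ℂ) + ((π / 2 : ℝ) : ℂ))))) ω := by
  rw [NSsol_deriv]
  exact (NS_hasDerivAt_ch lam ω).const_mul (a * lam)

private lemma NSsol_deriv_diff (lam a : ℂ) : Differentiable ℝ (deriv (NSsol lam a)) :=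
  fun ω => (NSsol_deriv_hasDerivAt lam a ω).differentiableAt

private lemma NSsol_dderiv (lam a : ℂ) (ω : ℝ) :
    deriv (deriv (NSsol lam a)) ω = lam ^ 2 * NSsol lam a ω := by
  rw [(NSsol_deriv_hasDerivAt lam a ω).deriv, NSsol]
  ring

end NSAux

section NSAux2

private lemma NS_arg_neg (lam : ℂ) : lam * (((-(π / 2) : ℝ) : ℂ) + ((π / 2 : ℝ) : ℂ)) = 0 := by
  push_cast; ring

private lemma NS_arg_pi (lam : ℂ) :
    lam * (((π / 2 : ℝ) : ℂ) + ((π / 2 : ℝ) : ℂ)) = lam * (π : ℂ) := by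
  push_cast; ring

private lemma NS_arg_zero (lam : ℂ) :
    lam * (((0 : ℝ) : ℂ) + ((π / 2 : ℝ) : ℂ)) = lam * (((π / 2 : ℝ)) : ℂ) := by
  push_cast; ring

/-- Representation: a solution of `f'' = lam² f` on the interval vanishing at the left endpoint
is a multiple of `sinh (lam (ω + π/2))`. -/
private lemma NS_repr (lam : ℂ) (f : ℝ → ℂ)
    (hd1 : Differentiable ℝ f) (hd2 : Differentiable ℝ (deriv f))
    (hode : ∀ ω ∈ Icc (-(π / 2)) (π / 2), deriv (deriv f) ω = lam ^ 2 * f ω)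
    (h0 : f (-(π / 2)) = 0) :
    ∀ ω ∈ Icc (-(π / 2)) (π / 2),
      lam * f ω = deriv f (-(π / 2)) * Complex.sinh (lam * ((ω : ℂ) + ((π / 2 : ℝ) : ℂ))) := by
  set Sh : ℝ → ℂ := fun ω => Complex.sinh (lam * ((ω : ℂ) + ((π / 2 : ℝ) : ℂ))) with hSh
  set Ch : ℝ → ℂ := fun ω => Complex.cosh (lam * ((ω : ℂ) + ((π / 2 : ℝ) : ℂ))) with hCh
  set g : ℝ → ℂ := fun ω => deriv f ω * Ch ω - lam * f ω * Sh ω with hg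
  set h : ℝ → ℂ := fun ω => deriv f ω * Sh ω - lam * f ω * Ch ω with hh
  have hgd : ∀ ω ∈ Icc (-(π / 2)) (π / 2), HasDerivAt g 0 ω := by
    intro ω hω
    have h1 : HasDerivAt f (deriv f ω) ω := (hd1 ω).hasDerivAt
    have h2 : HasDerivAt (deriv f) (deriv (deriv f) ω) ω := (hd2 ω).hasDerivAt
    have hD : HasDerivAt g
        ((deriv (deriv f) ω * Ch ω + deriv f ω * (lam * Sh ω)) -
          ((lam * deriv f ω) * Sh ω + (lam * f ω) * (lam * Ch ω))) ω :=
      (h2.mul (NS_hasDerivAt_ch lam ω)).sub ((h1.const_mul lam).mul (NS_hasDerivAt_sh lam ω))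
    have hz : (deriv (deriv f) ω * Ch ω + deriv f ω * (lam * Sh ω)) -
          ((lam * deriv f ω) * Sh ω + (lam * f ω) * (lam * Ch ω)) = 0 := by
      rw [hode ω hω]; ring
    rwa [hz] at hD
  have hhd : ∀ ω ∈ Icc (-(π / 2)) (π / 2), HasDerivAt h 0 ω := by
    intro ω hω
    have h1 : HasDerivAt f (deriv f ω) ω := (hd1 ω).hasDerivAt
    have h2 : HasDerivAt (deriv f) (deriv (deriv f) ω) ω := (hd2 ω).hasDerivAt
    have hD : HasDerivAt h
        ((deriv (deriv f) ω * Sh ω + deriv f ω * (lam * Ch ω)) -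
          ((lam * deriv f ω) * Ch ω + (lam * f ω) * (lam * Sh ω))) ω :=
      (h2.mul (NS_hasDerivAt_sh lam ω)).sub ((h1.const_mul lam).mul (NS_hasDerivAt_ch lam ω))
    have hz : (deriv (deriv f) ω * Sh ω + deriv f ω * (lam * Ch ω)) -
          ((lam * deriv f ω) * Ch ω + (lam * f ω) * (lam * Sh ω)) = 0 := by
      rw [hode ω hω]; ring
    rwa [hz] at hD
  have hgconst : ∀ ω ∈ Icc (-(π / 2)) (π / 2), g ω = g (-(π / 2)) :=
    constant_of_has_deriv_right_zero
      (fun ω hω => ((hgd ω hω).continuousAt).continuousWithinAt)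
      (fun ω hω => ((hgd ω (Ico_subset_Icc_self hω)).hasDerivWithinAt))
  have hhconst : ∀ ω ∈ Icc (-(π / 2)) (π / 2), h ω = h (-(π / 2)) :=
    constant_of_has_deriv_right_zero
      (fun ω hω => ((hhd ω hω).continuousAt).continuousWithinAt)
      (fun ω hω => ((hhd ω (Ico_subset_Icc_self hω)).hasDerivWithinAt))
  have hSh0 : Sh (-(π / 2)) = 0 := by
    simp only [hSh, NS_arg_neg, Complex.sinh_zero]
  have hCh0 : Ch (-(π / 2)) = 1 := by
    simp only [hCh, NS_arg_neg, Complex.cosh_zero]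
  have hgval : g (-(π / 2)) = deriv f (-(π / 2)) := by
    simp [hg, hSh0, hCh0, h0]
  have hhval : h (-(π / 2)) = 0 := by
    simp [hh, hSh0, hCh0, h0]
  intro ω hω
  have e1 : deriv f ω * Ch ω - lam * f ω * Sh ω = deriv f (-(π / 2)) := by
    have := hgconst ω hω; rw [hgval] at this; exact this
  have e2 : deriv f ω * Sh ω - lam * f ω * Ch ω = 0 := by
    have := hhconst ω hω; rw [hhval] at this; exact this
  have key : Ch ω ^ 2 - Sh ω ^ 2 = 1 :=
    Complex.cosh_sq_sub_sinh_sq (lam * ((ω : ℂ) + ((π / 2 : ℝ) : ℂ)))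
  calc lam * f ω = lam * f ω * (Ch ω ^ 2 - Sh ω ^ 2) := by rw [key]; ring
    _ = (deriv f ω * Ch ω - lam * f ω * Sh ω) * Sh ω
        - (deriv f ω * Sh ω - lam * f ω * Ch ω) * Ch ω := by ring
    _ = deriv f (-(π / 2)) * Sh ω := by rw [e1, e2]; ring

/-- Build an eigenfunction pair from coefficients solving the boundary linear system. -/
private lemma NS_build (b₁ b₂ : ℝ) (lam a₁ a₂ : ℂ)
    (h1 : a₁ * Complex.sinh (lam * (π : ℂ))
        + (b₁ : ℂ) * (a₂ * Complex.sinh (lam * (((π / 2 : ℝ)) : ℂ))) = 0)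
    (h2 : a₂ * Complex.sinh (lam * (π : ℂ))
        + (b₂ : ℂ) * (a₁ * Complex.sinh (lam * (((π / 2 : ℝ)) : ℂ))) = 0)
    (hw : (∃ ω ∈ Icc (-(π / 2)) (π / 2), NSsol lam a₁ ω ≠ 0) ∨
          (∃ ω ∈ Icc (-(π / 2)) (π / 2), NSsol lam a₂ ω ≠ 0)) :
    NSEigen b₁ b₂ lam := by
  refine ⟨NSsol lam a₁, NSsol lam a₂, NSsol_diff lam a₁, NSsol_deriv_diff lam a₁,
    NSsol_diff lam a₂, NSsol_deriv_diff lam a₂, hw,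
    fun ω _ => NSsol_dderiv lam a₁ ω, fun ω _ => NSsol_dderiv lam a₂ ω, ?_, ?_, ?_, ?_⟩
  · simp [NSsol, NS_arg_neg]
  · simpa [NSsol, NS_arg_pi, NS_arg_zero] using h1
  · simp [NSsol, NS_arg_neg]
  · simpa [NSsol, NS_arg_pi, NS_arg_zero] using h2

end NSAux2

theorem system_nonzero_eigenvalue_iff (b₁ b₂ : ℝ) (lam : ℂ) (hlam : lam ≠ 0) :
    (NSEigen b₁ b₂ lam ↔
      Complex.sinh (lam * (π : ℂ)) ^ 2
        = (b₁ : ℂ) * (b₂ : ℂ) * Complex.sinh (lam * ((π : ℝ) / 2 : ℝ)) ^ 2) ∧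
    (Complex.sinh (lam * (π : ℂ)) ^ 2
        = (b₁ : ℂ) * (b₂ : ℂ) * Complex.sinh (lam * ((π : ℝ) / 2 : ℝ)) ^ 2 ↔
      Complex.sinh (lam * ((π : ℝ) / 2 : ℝ)) ^ 2
        * (4 * Complex.cosh (lam * ((π : ℝ) / 2 : ℝ)) ^ 2 - (b₁ : ℂ) * (b₂ : ℂ)) = 0) := by
  set s : ℂ := Complex.sinh (lam * ((π : ℝ) / 2 : ℝ)) with hs_def
  set c : ℂ := Complex.cosh (lam * ((π : ℝ) / 2 : ℝ)) with hc_def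
  have hS : Complex.sinh (lam * (π : ℂ)) = 2 * s * c := by
    rw [show lam * (π : ℂ) = 2 * (lam * (((π : ℝ) / 2 : ℝ) : ℂ)) by push_cast; ring,
      Complex.sinh_two_mul]
  have part2 : (Complex.sinh (lam * (π : ℂ)) ^ 2 = (b₁ : ℂ) * (b₂ : ℂ) * s ^ 2 ↔
      s ^ 2 * (4 * c ^ 2 - (b₁ : ℂ) * (b₂ : ℂ)) = 0) := by
    rw [hS]
    constructor <;> intro h <;> linear_combination h
  refine ⟨?_, part2⟩
  have hpi : (0 : ℝ) < π := Real.pi_pos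
  have hmem0 : (0 : ℝ) ∈ Icc (-(π / 2)) (π / 2) := ⟨by linarith, by linarith⟩
  have hmemR : (π / 2 : ℝ) ∈ Icc (-(π / 2)) (π / 2) := ⟨by linarith, le_refl _⟩
  constructor
  · -- forward direction
    rintro ⟨φ₁, φ₂, hd11, hd12, hd21, hd22, hwit, hode1, hode2, hb10, hb1, hb20, hb2⟩
    set a₁ : ℂ := deriv φ₁ (-(π / 2)) with ha₁
    set a₂ : ℂ := deriv φ₂ (-(π / 2)) with ha₂
    have hr1 := NS_repr lam φ₁ hd11 hd12 hode1 hb10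
    have hr2 := NS_repr lam φ₂ hd21 hd22 hode2 hb20
    have hval1R : lam * φ₁ (π / 2) = a₁ * (2 * s * c) := by
      have := hr1 (π / 2) hmemR
      rw [NS_arg_pi, hS] at this; exact this
    have hval10 : lam * φ₁ 0 = a₁ * s := by
      have := hr1 0 hmem0
      rw [NS_arg_zero] at this; exact this
    have hval2R : lam * φ₂ (π / 2) = a₂ * (2 * s * c) := by
      have := hr2 (π / 2) hmemR
      rw [NS_arg_pi, hS] at this; exact this
    have hval20 : lam * φ₂ 0 = a₂ * s := by
      have := hr2 0 hmem0
      rw [NS_arg_zero] at this; exact this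
    have e1 : a₁ * (2 * s * c) + (b₁ : ℂ) * (a₂ * s) = 0 := by
      linear_combination lam * hb1 - hval1R - (b₁ : ℂ) * hval20
    have e2 : a₂ * (2 * s * c) + (b₂ : ℂ) * (a₁ * s) = 0 := by
      linear_combination lam * hb2 - hval2R - (b₂ : ℂ) * hval10
    have hA : a₁ ≠ 0 ∨ a₂ ≠ 0 := by
      rcases hwit with ⟨ω, hω, hne⟩ | ⟨ω, hω, hne⟩
      · left; intro hz
        apply hne
        have := hr1 ω hω
        rw [← ha₁, hz, zero_mul] at this
        exact (mul_eq_zero.mp this).resolve_left hlam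
      · right; intro hz
        apply hne
        have := hr2 ω hω
        rw [← ha₂, hz, zero_mul] at this
        exact (mul_eq_zero.mp this).resolve_left hlam
    rw [hS]
    by_cases ha1 : a₁ = 0
    · by_cases ha2 : a₂ = 0
      · rcases hA with h | h <;> exact absurd (by assumption) h
      · rw [ha1] at e1 e2
        have h1' : (b₁ : ℂ) * s = 0 := by
          have h' : a₂ * ((b₁ : ℂ) * s) = 0 := by linear_combination e1
          exact (mul_eq_zero.mp h').resolve_left ha2
        have h2' : s * c = 0 := by
          have h' : (a₂ * 2) * (s * c) = 0 := by linear_combination e2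
          exact (mul_eq_zero.mp h').resolve_left (mul_ne_zero ha2 two_ne_zero)
        linear_combination (4 * s * c) * h2' - (b₂ : ℂ) * s * h1'
    · by_cases ha2 : a₂ = 0
      · rw [ha2] at e1 e2
        have h1' : (b₂ : ℂ) * s = 0 := by
          have h' : a₁ * ((b₂ : ℂ) * s) = 0 := by linear_combination e2
          exact (mul_eq_zero.mp h').resolve_left ha1
        have h2' : s * c = 0 := by
          have h' : (a₁ * 2) * (s * c) = 0 := by linear_combination e1
          exact (mul_eq_zero.mp h').resolve_left (mul_ne_zero ha1 two_ne_zero)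
        linear_combination (4 * s * c) * h2' - (b₁ : ℂ) * s * h1'
      · have aux : (a₁ * a₂) * ((2 * s * c) ^ 2 - (b₁ : ℂ) * (b₂ : ℂ) * s ^ 2) = 0 := by
          linear_combination (a₂ * (2 * s * c)) * e1 - ((b₁ : ℂ) * a₂ * s) * e2
        have := (mul_eq_zero.mp aux).resolve_left (mul_ne_zero ha1 ha2)
        linear_combination this
  · -- backward direction
    intro h
    have hfac : s ^ 2 * (4 * c ^ 2 - (b₁ : ℂ) * (b₂ : ℂ)) = 0 := part2.mp h
    by_cases hs0 : s = 0
    · -- take φ₁ = sinh solution, φ₂ = 0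
      apply NS_build b₁ b₂ lam 1 0
      · rw [hS, hs0]; ring
      · rw [← hs_def, hs0]; ring
      · left
        by_contra hcon
        push_neg at hcon
        have hnhds : Icc (-(π / 2)) (π / 2) ∈ nhds (0 : ℝ) :=
          Icc_mem_nhds (by linarith) (by linarith)
        have heq : (NSsol lam 1) =ᶠ[nhds (0 : ℝ)] fun _ => (0 : ℂ) :=
          Filter.eventuallyEq_of_mem hnhds hcon
        have hder0 : deriv (NSsol lam 1) 0 = 0 := by
          rw [heq.deriv_eq, deriv_const]
        rw [(NSsol_hasDerivAt lam 1 0).deriv, NS_arg_zero, ← hc_def] at hder0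
        have hc2 : c ^ 2 = 1 := by
          rw [hc_def, Complex.cosh_sq, ← hs_def, hs0]; ring
        have hc : c ≠ 0 := by
          intro hz; rw [hz] at hc2; simp at hc2
        simp only [one_mul] at hder0
        exact (mul_ne_zero hlam hc) hder0
    · have h4 : 4 * c ^ 2 - (b₁ : ℂ) * (b₂ : ℂ) = 0 :=
        (mul_eq_zero.mp hfac).resolve_left (pow_ne_zero 2 hs0)
      by_cases hkey : (b₁ : ℂ) = 0 ∧ c = 0
      · apply NS_build b₁ b₂ lam 0 1
        · rw [← hs_def, hkey.1]; ring
        · rw [hS, hkey.2]; ring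
        · right
          exact ⟨0, hmem0, by
            simp only [NSsol, NS_arg_zero, ← hs_def, one_mul]
            exact hs0⟩
      · apply NS_build b₁ b₂ lam (b₁ : ℂ) (-(2 * c))
        · rw [hS, ← hs_def]; ring
        · rw [hS, ← hs_def]; linear_combination (-s) * h4
        · rw [not_and_or] at hkey
          rcases hkey with hb1 | hc0
          · left
            exact ⟨0, hmem0, by
              simp only [NSsol, NS_arg_zero, ← hs_def]
              exact mul_ne_zero hb1 hs0⟩
          · right
            exact ⟨0, hmem0, by
              simp only [NSsol, NS_arg_zero, ← hs_def]
              exact mul_ne_zero (neg_ne_zero.mpr (mul_ne_zero two_ne_zero hc0)) hs0⟩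
end

section
/- Let b₁, b₂ ∈ ℝ. Then λ = 0 is an eigenvalue of the nonlocal system NS(b₁, b₂) (i.e., there exist twice differentiable φ₁, φ₂ : ℝ → ℂ, not both identically zero on [−π/2, π/2], with φⱼ''(ω) = 0 on [−π/2, π/2] and φ₁(−π/2) = 0, φ₁(π/2) + b₁·φ₂(0) = 0, φ₂(−π/2) = 0, φ₂(π/2) + b₂·φ₁(0) = 0) if and only if b₁·b₂ = 4. -/
open Real Set

lemma affine_of_deriv2_zero (φ : ℝ → ℂ) (hφ : Differentiable ℝ φ)
    (hφ' : Differentiable ℝ (deriv φ))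
    (h : ∀ ω ∈ Icc (-(π / 2)) (π / 2), deriv (deriv φ) ω = 0) :
    ∀ ω ∈ Icc (-(π / 2)) (π / 2),
      φ ω = φ (-(π / 2)) + ((ω : ℂ) + (π / 2 : ℝ)) * deriv φ (-(π / 2)) := by
  have hab : -(π / 2) < π / 2 := by have := pi_pos; linarith
  have hud := uniqueDiffOn_Icc hab
  have h1 : ∀ x ∈ Icc (-(π / 2)) (π / 2), deriv φ x = deriv φ (-(π / 2)) := by
    apply constant_of_derivWithin_zero hφ'.differentiableOn
    intro x hx
    rw [(hφ' x).derivWithin (hud x (Ico_subset_Icc_self hx))]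
    exact h x (Ico_subset_Icc_self hx)
  set c := deriv φ (-(π / 2)) with hc
  set g : ℝ → ℂ := fun x => φ x - (x : ℂ) * c with hg
  have hgderiv : ∀ x, HasDerivAt g (deriv φ x - c) x := by
    intro x
    have h2 : HasDerivAt (fun x : ℝ => (x : ℂ) * c) c x := by
      simpa using (Complex.ofRealCLM.hasDerivAt (x := x)).mul_const c
    exact (hφ x).hasDerivAt.sub h2
  have h2 : ∀ x ∈ Icc (-(π / 2)) (π / 2), g x = g (-(π / 2)) := by
    apply constant_of_derivWithin_zero
      (fun x _ => (hgderiv x).differentiableAt.differentiableWithinAt)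
    intro x hx
    rw [(hgderiv x).differentiableAt.derivWithin (hud x (Ico_subset_Icc_self hx)),
      (hgderiv x).deriv, h1 x (Ico_subset_Icc_self hx)]
    simp
  intro ω hω
  have h3 := h2 ω hω
  simp only [hg] at h3
  have : ((-(π / 2) : ℝ) : ℂ) = -((π / 2 : ℝ) : ℂ) := by push_cast; ring
  rw [this] at h3
  linear_combination h3

theorem system_zero_eigenvalue_iff (b₁ b₂ : ℝ) :
    NSEigen b₁ b₂ 0 ↔ b₁ * b₂ = 4 := by
  constructor
  · rintro ⟨φ₁, φ₂, hd1, hd1', hd2, hd2', hne, hode1, hode2, hb1, hb2, hb3, hb4⟩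
    have hpi := pi_pos
    have haff1 := affine_of_deriv2_zero φ₁ hd1 hd1' (fun ω hω => by
      simpa using hode1 ω hω)
    have haff2 := affine_of_deriv2_zero φ₂ hd2 hd2' (fun ω hω => by
      simpa using hode2 ω hω)
    set c₁ := deriv φ₁ (-(π / 2)) with hc1
    set c₂ := deriv φ₂ (-(π / 2)) with hc2
    have hmem0 : (0 : ℝ) ∈ Icc (-(π / 2)) (π / 2) := by constructor <;> linarith
    have hmemR : (π / 2 : ℝ) ∈ Icc (-(π / 2)) (π / 2) := by constructor <;> linarith
    have e1 : φ₁ (π / 2) = (π : ℂ) * c₁ := by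
      have := haff1 (π / 2) hmemR; rw [this, hb1]; push_cast; ring
    have e2 : φ₂ (π / 2) = (π : ℂ) * c₂ := by
      have := haff2 (π / 2) hmemR; rw [this, hb3]; push_cast; ring
    have e3 : φ₁ 0 = ((π : ℂ) / 2) * c₁ := by
      have := haff1 0 hmem0; rw [this, hb1]; push_cast; ring
    have e4 : φ₂ 0 = ((π : ℂ) / 2) * c₂ := by
      have := haff2 0 hmem0; rw [this, hb3]; push_cast; ring
    have hπ : (π : ℂ) ≠ 0 := by exact_mod_cast pi_ne_zero
    have eq1 : 2 * c₁ + (b₁ : ℂ) * c₂ = 0 := by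
      apply mul_left_cancel₀ hπ
      rw [mul_zero]
      linear_combination 2 * hb2 - 2 * e1 - 2 * (b₁ : ℂ) * e4
    have eq2 : 2 * c₂ + (b₂ : ℂ) * c₁ = 0 := by
      apply mul_left_cancel₀ hπ
      rw [mul_zero]
      linear_combination 2 * hb4 - 2 * e2 - 2 * (b₂ : ℂ) * e3
    have habs : c₁ ≠ 0 ∨ c₂ ≠ 0 := by
      by_contra hcon
      push_neg at hcon
      obtain ⟨hz1, hz2⟩ := hcon
      rcases hne with ⟨ω, hω, hne⟩ | ⟨ω, hω, hne⟩
      · exact hne (by rw [haff1 ω hω, hb1, hz1]; ring)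
      · exact hne (by rw [haff2 ω hω, hb3, hz2]; ring)
    have key : ((b₁ : ℂ) * b₂ - 4) * c₁ = 0 ∧ ((b₁ : ℂ) * b₂ - 4) * c₂ = 0 := by
      constructor
      · linear_combination (b₁ : ℂ) * eq2 - 2 * eq1
      · linear_combination (b₂ : ℂ) * eq1 - 2 * eq2
    have hbb : (b₁ : ℂ) * b₂ = 4 := by
      rcases habs with h | h
      · rcases mul_eq_zero.mp key.1 with h' | h'
        · exact sub_eq_zero.mp h'
        · exact absurd h' h
      · rcases mul_eq_zero.mp key.2 with h' | h'
        · exact sub_eq_zero.mp h'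
        · exact absurd h' h
    exact_mod_cast hbb
  · intro hbb
    refine ⟨fun ω => ((ω : ℂ) + (π / 2 : ℝ)) * b₁, fun ω => ((ω : ℂ) + (π / 2 : ℝ)) * (-2), ?_⟩
    have hder : ∀ (c : ℂ) (x : ℝ),
        HasDerivAt (fun ω : ℝ => ((ω : ℂ) + (π / 2 : ℝ)) * c) c x := by
      intro c x
      simpa using ((Complex.ofRealCLM.hasDerivAt (x := x)).add_const
        ((π / 2 : ℝ) : ℂ)).mul_const c
    have hderiv : ∀ (c : ℂ),
        deriv (fun ω : ℝ => ((ω : ℂ) + (π / 2 : ℝ)) * c) = fun _ => c := by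
      intro c; funext x; exact (hder c x).deriv
    have hpi := pi_pos
    refine ⟨fun x => (hder _ x).differentiableAt, ?_,
      fun x => (hder _ x).differentiableAt, ?_, ?_, ?_, ?_, ?_, ?_, ?_, ?_⟩
    · rw [hderiv]; exact differentiable_const _
    · rw [hderiv]; exact differentiable_const _
    · right
      refine ⟨π / 2, by constructor <;> linarith, ?_⟩
      have : ((π / 2 : ℝ) : ℂ) + ((π / 2 : ℝ) : ℂ) ≠ 0 := by
        push_cast
        intro h
        have := pi_ne_zero
        simp only [← add_div] at h
        norm_num at h
      simp only [ne_eq, mul_eq_zero, not_or]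
      exact ⟨this, by norm_num⟩
    · intro ω hω; rw [hderiv]; simp
    · intro ω hω; rw [hderiv]; simp
    · push_cast; ring
    · push_cast; ring
    · push_cast; ring
    · push_cast
      have : (b₁ : ℂ) * b₂ = 4 := by exact_mod_cast hbb
      linear_combination (π / 2 : ℂ) * this
end

section
/- Let b₁, b₂ ∈ ℝ and let m be an odd integer. Then the nonlocal system NS(b₁, b₂) has an eigenvalue λ ∈ ℂ with Im λ = m if and only if b₁·b₂ ≤ 0. -/
open Real Set

noncomputable def Sf (lam : ℂ) (ω : ℝ) : ℂ := Complex.sinh (lam * (↑ω + ↑(π/2)))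
noncomputable def Cf (lam : ℂ) (ω : ℝ) : ℂ := Complex.cosh (lam * (↑ω + ↑(π/2)))

lemma hasDerivAt_Sf (lam : ℂ) (x : ℝ) : HasDerivAt (Sf lam) (lam * Cf lam x) x := by
  have h0 : HasDerivAt (fun z : ℂ => lam * (z + ↑(π/2))) (lam * 1) (x : ℂ) :=
    ((hasDerivAt_id (x:ℂ)).add_const (↑(π/2) : ℂ)).const_mul lam
  have h1 : HasDerivAt (fun z : ℂ => Complex.sinh (lam * (z + ↑(π/2))))
      (Complex.cosh (lam * (↑x + ↑(π/2))) * (lam * 1)) (x : ℂ) :=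
    (Complex.hasDerivAt_sinh _).comp _ h0
  have h2 : HasDerivAt (fun ω : ℝ => Complex.sinh (lam * (↑ω + ↑(π/2))))
      (Complex.cosh (lam * (↑x + ↑(π/2))) * (lam * 1)) x := h1.comp_ofReal
  have h3 : lam * Cf lam x = Complex.cosh (lam * (↑x + ↑(π/2))) * (lam * 1) := by
    simp [Cf]; ring
  exact h3 ▸ h2

lemma hasDerivAt_Cf (lam : ℂ) (x : ℝ) : HasDerivAt (Cf lam) (lam * Sf lam x) x := by
  have h0 : HasDerivAt (fun z : ℂ => lam * (z + ↑(π/2))) (lam * 1) (x : ℂ) :=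
    ((hasDerivAt_id (x:ℂ)).add_const (↑(π/2) : ℂ)).const_mul lam
  have h1 : HasDerivAt (fun z : ℂ => Complex.cosh (lam * (z + ↑(π/2))))
      (Complex.sinh (lam * (↑x + ↑(π/2))) * (lam * 1)) (x : ℂ) :=
    (Complex.hasDerivAt_cosh _).comp _ h0
  have h2 : HasDerivAt (fun ω : ℝ => Complex.cosh (lam * (↑ω + ↑(π/2))))
      (Complex.sinh (lam * (↑x + ↑(π/2))) * (lam * 1)) x := h1.comp_ofReal
  have h3 : lam * Sf lam x = Complex.sinh (lam * (↑x + ↑(π/2))) * (lam * 1) := by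
    simp [Sf]; ring
  exact h3 ▸ h2

lemma Sf_neg : Sf lam (-(π/2)) = 0 := by
  have : ((-(π/2) : ℝ) : ℂ) + ↑(π/2) = 0 := by push_cast; ring
  simp [Sf, this]

lemma Cf_neg : Cf lam (-(π/2)) = 1 := by
  have : ((-(π/2) : ℝ) : ℂ) + ↑(π/2) = 0 := by push_cast; ring
  simp [Cf, this]

lemma Sf_zero : Sf lam 0 = Complex.sinh (lam * ↑(π/2)) := by simp [Sf]

lemma Sf_pos : Sf lam (π/2) = Complex.sinh (lam * ↑π) := by
  have : ((π/2 : ℝ) : ℂ) + ↑(π/2) = (π : ℂ) := by push_cast; ring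
  simp [Sf, this]

lemma sinh_decomp (x y : ℝ) : Complex.sinh (↑x + ↑y * Complex.I)
    = ↑(Real.sinh x * Real.cos y) + ↑(Real.cosh x * Real.sin y) * Complex.I := by
  rw [Complex.sinh_add, Complex.sinh_mul_I, Complex.cosh_mul_I, ← Complex.ofReal_sinh,
    ← Complex.ofReal_cosh, ← Complex.ofReal_cos, ← Complex.ofReal_sin]
  push_cast; ring

lemma cosh_decomp (x y : ℝ) : Complex.cosh (↑x + ↑y * Complex.I)
    = ↑(Real.cosh x * Real.cos y) + ↑(Real.sinh x * Real.sin y) * Complex.I := by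
  rw [Complex.cosh_add, Complex.sinh_mul_I, Complex.cosh_mul_I, ← Complex.ofReal_sinh,
    ← Complex.ofReal_cosh, ← Complex.ofReal_cos, ← Complex.ofReal_sin]
  push_cast; ring

lemma mul_ofReal_decomp (lam : ℂ) (r : ℝ) :
    lam * ↑r = ↑(lam.re * r) + ↑(lam.im * r) * Complex.I := by
  conv_lhs => rw [← Complex.re_add_im lam]
  push_cast; ring

lemma odd_cos (m : ℤ) (hm : Odd m) : Real.cos ((m : ℝ) * (π/2)) = 0 := by
  obtain ⟨k, hk⟩ := hm
  rw [Real.cos_eq_zero_iff]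
  exact ⟨k, by push_cast [hk]; ring⟩

lemma odd_sin_sq (m : ℤ) (hm : Odd m) : Real.sin ((m : ℝ) * (π/2)) ^ 2 = 1 := by
  have h := Real.sin_sq_add_cos_sq ((m : ℝ) * (π/2))
  rw [odd_cos m hm] at h; nlinarith

lemma odd_sin_ne (m : ℤ) (hm : Odd m) : Real.sin ((m : ℝ) * (π/2)) ≠ 0 := by
  intro h
  have := odd_sin_sq m hm
  rw [h] at this; norm_num at this

lemma diff_Sf (lam : ℂ) : Differentiable ℝ (Sf lam) :=
  fun x => (hasDerivAt_Sf lam x).differentiableAt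
lemma diff_Cf (lam : ℂ) : Differentiable ℝ (Cf lam) :=
  fun x => (hasDerivAt_Cf lam x).differentiableAt

lemma rep (lam : ℂ) (φ : ℝ → ℂ) (hφ : Differentiable ℝ φ) (hφ' : Differentiable ℝ (deriv φ))
    (hode : ∀ ω ∈ Icc (-(π/2)) (π/2), deriv (deriv φ) ω = lam^2 * φ ω)
    (h0 : φ (-(π/2)) = 0) :
    ∀ ω ∈ Icc (-(π/2)) (π/2), lam * φ ω = deriv φ (-(π/2)) * Sf lam ω := by
  have key : ∀ F : ℝ → ℂ, (∀ x ∈ Icc (-(π/2)) (π/2), HasDerivAt F 0 x) → Continuous F →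
      ∀ x ∈ Icc (-(π/2)) (π/2), F x = F (-(π/2)) := fun F hF hc =>
    constant_of_has_deriv_right_zero hc.continuousOn
      (fun x hx => (hF x (Ico_subset_Icc_self hx)).hasDerivWithinAt)
  have hE1 : ∀ x ∈ Icc (-(π/2)) (π/2),
      deriv φ x * Sf lam x - lam * φ x * Cf lam x = 0 := by
    have := key (fun ω => deriv φ ω * Sf lam ω - lam * φ ω * Cf lam ω) ?_ ?_
    · intro x hx
      have h := this x hx
      simpa [Sf_neg, Cf_neg, h0] using h
    · intro x hx
      have hd1 : HasDerivAt (fun ω => deriv φ ω * Sf lam ω)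
          (deriv (deriv φ) x * Sf lam x + deriv φ x * (lam * Cf lam x)) x :=
        ((hφ' x).hasDerivAt).mul (hasDerivAt_Sf lam x)
      have hd2 : HasDerivAt (fun ω => lam * φ ω * Cf lam ω)
          ((lam * deriv φ x) * Cf lam x + lam * φ x * (lam * Sf lam x)) x :=
        (((hφ x).hasDerivAt).const_mul lam).mul (hasDerivAt_Cf lam x)
      have hval : deriv (deriv φ) x * Sf lam x + deriv φ x * (lam * Cf lam x)
          - ((lam * deriv φ x) * Cf lam x + lam * φ x * (lam * Sf lam x)) = 0 := by
        rw [hode x hx]; ring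
      have := hd1.sub hd2
      rwa [hval] at this
    · exact ((hφ'.mul (diff_Sf lam)).sub ((hφ.const_mul lam).mul (diff_Cf lam))).continuous
  have hE2 : ∀ x ∈ Icc (-(π/2)) (π/2),
      deriv φ x * Cf lam x - lam * φ x * Sf lam x = deriv φ (-(π/2)) := by
    have := key (fun ω => deriv φ ω * Cf lam ω - lam * φ ω * Sf lam ω) ?_ ?_
    · intro x hx
      have h := this x hx
      simpa [Sf_neg, Cf_neg, h0] using h
    · intro x hx
      have hd1 : HasDerivAt (fun ω => deriv φ ω * Cf lam ω)
          (deriv (deriv φ) x * Cf lam x + deriv φ x * (lam * Sf lam x)) x :=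
        ((hφ' x).hasDerivAt).mul (hasDerivAt_Cf lam x)
      have hd2 : HasDerivAt (fun ω => lam * φ ω * Sf lam ω)
          ((lam * deriv φ x) * Sf lam x + lam * φ x * (lam * Cf lam x)) x :=
        (((hφ x).hasDerivAt).const_mul lam).mul (hasDerivAt_Sf lam x)
      have hval : deriv (deriv φ) x * Cf lam x + deriv φ x * (lam * Sf lam x)
          - ((lam * deriv φ x) * Sf lam x + lam * φ x * (lam * Cf lam x)) = 0 := by
        rw [hode x hx]; ring
      have := hd1.sub hd2
      rwa [hval] at this
    · exact ((hφ'.mul (diff_Cf lam)).sub ((hφ.const_mul lam).mul (diff_Sf lam))).continuous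
  intro ω hω
  have h1 := hE1 ω hω
  have h2 := hE2 ω hω
  have h3 : Cf lam ω ^ 2 - Sf lam ω ^ 2 = 1 := Complex.cosh_sq_sub_sinh_sq _
  linear_combination Sf lam ω * h2 - Cf lam ω * h1 - lam * φ ω * h3

lemma sinh_half_ne (lam : ℂ) (m : ℤ) (hm : Odd m) (him : lam.im = (m:ℝ)) :
    Complex.sinh (lam * ↑(π/2)) ≠ 0 := by
  intro h
  have hsim : (Complex.sinh (lam*(↑(π/2):ℂ))).im
      = Real.cosh (lam.re*(π/2)) * Real.sin ((m:ℝ)*(π/2)) := by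
    rw [mul_ofReal_decomp, sinh_decomp]
    simp only [Complex.add_im, Complex.add_re, Complex.mul_im, Complex.mul_re, Complex.ofReal_im, Complex.ofReal_re, Complex.I_im, Complex.I_re, mul_zero, zero_mul, mul_one, zero_add, add_zero, sub_zero, zero_sub, him]
  rw [h] at hsim
  simp only [Complex.zero_im] at hsim
  exact mul_ne_zero (Real.cosh_pos _).ne' (odd_sin_ne m hm) hsim.symm

lemma cosh_half_re (lam : ℂ) (m : ℤ) (hm : Odd m) (him : lam.im = (m:ℝ)) :
    (Complex.cosh (lam * ↑(π/2))).re = 0 := by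
  rw [mul_ofReal_decomp, cosh_decomp]
  simp only [Complex.add_im, Complex.add_re, Complex.mul_im, Complex.mul_re, Complex.ofReal_im, Complex.ofReal_re, Complex.I_im, Complex.I_re, mul_zero, zero_mul, mul_one, zero_add, add_zero, sub_zero, zero_sub, him]
  rw [odd_cos m hm, mul_zero]

theorem fwd (b₁ b₂ : ℝ) (m : ℤ) (hm : Odd m)
    (h : ∃ lam : ℂ, lam.im = (m : ℝ) ∧ NSEigen b₁ b₂ lam) : b₁ * b₂ ≤ 0 := by
  obtain ⟨lam, him, φ₁, φ₂, hd1, hd1', hd2, hd2', hnt, ho1, ho2, hbc1, hbc2, hbc3, hbc4⟩ := h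
  have hm0 : m ≠ 0 := by rintro rfl; exact (Int.not_odd_iff_even.mpr Even.zero) hm
  have hmR : (m:ℝ) ≠ 0 := Int.cast_ne_zero.mpr hm0
  have hlam : lam ≠ 0 := by
    intro h; rw [h] at him; simp only [Complex.zero_im] at him; exact hmR him.symm
  have hpi := pi_pos
  have hmem_pos : (π/2) ∈ Icc (-(π/2)) (π/2) := ⟨by linarith, le_refl _⟩
  have hmem0 : (0:ℝ) ∈ Icc (-(π/2)) (π/2) := ⟨by linarith, by linarith⟩
  have r1 := rep lam φ₁ hd1 hd1' ho1 hbc1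
  have r2 := rep lam φ₂ hd2 hd2' ho2 hbc3
  set A := deriv φ₁ (-(π/2)) with hAdef
  set B := deriv φ₂ (-(π/2)) with hBdef
  have hs : Complex.sinh (lam * ↑(π/2)) ≠ 0 := sinh_half_ne lam m hm him
  have e1 : A * Complex.sinh (lam*↑π) + ↑b₁*(B*Complex.sinh (lam*↑(π/2))) = 0 := by
    have t1 := r1 (π/2) hmem_pos
    have t2 := r2 0 hmem0
    rw [Sf_pos] at t1; rw [Sf_zero] at t2
    linear_combination lam * hbc2 - t1 - (b₁:ℂ) * t2
  have e2 : B * Complex.sinh (lam*↑π) + ↑b₂*(A*Complex.sinh (lam*↑(π/2))) = 0 := by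
    have t1 := r2 (π/2) hmem_pos
    have t2 := r1 0 hmem0
    rw [Sf_pos] at t1; rw [Sf_zero] at t2
    linear_combination lam * hbc4 - t1 - (b₂:ℂ) * t2
  have hAB : A ≠ 0 ∨ B ≠ 0 := by
    rcases hnt with ⟨ω, hω, hne⟩ | ⟨ω, hω, hne⟩
    · left; intro hA0
      have t := r1 ω hω; rw [hA0, zero_mul] at t
      exact hne ((mul_eq_zero.mp t).resolve_left hlam)
    · right; intro hB0
      have t := r2 ω hω; rw [hB0, zero_mul] at t
      exact hne ((mul_eq_zero.mp t).resolve_left hlam)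
  rcases eq_or_ne A 0 with hA | hA
  · have hB : B ≠ 0 := hAB.resolve_left (not_not_intro hA)
    have hb1 : (b₁:ℂ) = 0 := by
      rw [hA, zero_mul, zero_add] at e1
      rcases mul_eq_zero.mp e1 with h | h
      · exact h
      · exact absurd h (mul_ne_zero hB hs)
    have : b₁ = 0 := by exact_mod_cast hb1
    simp [this]
  · rcases eq_or_ne B 0 with hB | hB
    · have hb2 : (b₂:ℂ) = 0 := by
        rw [hB, zero_mul, zero_add] at e2
        rcases mul_eq_zero.mp e2 with h | h
        · exact h
        · exact absurd h (mul_ne_zero hA hs)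
      have : b₂ = 0 := by exact_mod_cast hb2
      simp [this]
    · set c := Complex.cosh (lam*↑(π/2)) with hcdef
      have hSS : Complex.sinh (lam*↑π)^2 = (↑b₁*↑b₂) * Complex.sinh (lam*↑(π/2))^2 := by
        have h3 : A*B*(Complex.sinh (lam*↑π)^2 - (↑b₁*↑b₂)*Complex.sinh (lam*↑(π/2))^2) = 0 := by
          linear_combination (B*Complex.sinh (lam*↑π))*e1 - ((b₁:ℂ)*B*Complex.sinh (lam*↑(π/2)))*e2
        have h4 := (mul_eq_zero.mp h3).resolve_left (mul_ne_zero hA hB)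
        linear_combination h4
      have hdouble : Complex.sinh (lam*↑π) = 2*Complex.sinh (lam*↑(π/2))*c := by
        have hππ : lam*(↑π:ℂ) = 2*(lam*↑(π/2)) := by push_cast; ring
        rw [hππ, Complex.sinh_two_mul]
      have hc4 : 4*c^2 = (b₁:ℂ)*↑b₂ := by
        have h5 : (4*c^2 - ↑b₁*↑b₂) * Complex.sinh (lam*↑(π/2))^2 = 0 := by
          rw [hdouble] at hSS; linear_combination hSS
        have h6 := (mul_eq_zero.mp h5).resolve_right (pow_ne_zero 2 hs)
        linear_combination h6
      have hcre : c.re = 0 := cosh_half_re lam m hm him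
      have hre : b₁*b₂ = 4*(c.re*c.re - c.im*c.im) := by
        have h7 := congrArg Complex.re hc4
        simpa [pow_two, Complex.mul_re, Complex.ofReal_re, Complex.ofReal_im] using h7.symm
      nlinarith [sq_nonneg c.im, sq_nonneg c.re]

lemma mk_eigen (b₁ b₂ : ℝ) (lam A B : ℂ)
    (e1 : A * Complex.sinh (lam * ↑π) + ↑b₁ * (B * Complex.sinh (lam * ↑(π/2))) = 0)
    (e2 : B * Complex.sinh (lam * ↑π) + ↑b₂ * (A * Complex.sinh (lam * ↑(π/2))) = 0)
    (hnt : A ≠ 0 ∨ B ≠ 0) (hs : Complex.sinh (lam * ↑(π/2)) ≠ 0) :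
    NSEigen b₁ b₂ lam := by
  have hpi := pi_pos
  have hmem0 : (0:ℝ) ∈ Icc (-(π/2)) (π/2) := ⟨by linarith, by linarith⟩
  have derivEq : ∀ E : ℂ, deriv (fun ω => E * Sf lam ω) = fun x => E * (lam * Cf lam x) :=
    fun E => funext fun x => ((hasDerivAt_Sf lam x).const_mul E).deriv
  have diff1 : ∀ E : ℂ, Differentiable ℝ (fun ω => E * Sf lam ω) :=
    fun E x => ((hasDerivAt_Sf lam x).const_mul E).differentiableAt
  have diff2 : ∀ E : ℂ, Differentiable ℝ (deriv (fun ω => E * Sf lam ω)) := by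
    intro E; rw [derivEq]
    exact fun x => (((hasDerivAt_Cf lam x).const_mul lam).const_mul E).differentiableAt
  have ode : ∀ (E : ℂ) (x : ℝ), deriv (deriv (fun ω => E * Sf lam ω)) x
      = lam^2 * (E * Sf lam x) := by
    intro E x
    rw [derivEq]
    have h := (((hasDerivAt_Cf lam x).const_mul lam).const_mul E).deriv
    rw [h]; ring
  refine ⟨fun ω => A * Sf lam ω, fun ω => B * Sf lam ω, diff1 A, diff2 A, diff1 B, diff2 B,
    ?_, fun ω _ => ode A ω, fun ω _ => ode B ω, ?_, ?_, ?_, ?_⟩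
  · rcases hnt with hA | hB
    · exact Or.inl ⟨0, hmem0, by show A * Sf lam 0 ≠ 0; rw [Sf_zero]; exact mul_ne_zero hA hs⟩
    · exact Or.inr ⟨0, hmem0, by show B * Sf lam 0 ≠ 0; rw [Sf_zero]; exact mul_ne_zero hB hs⟩
  · show A * Sf lam (-(π/2)) = 0; rw [Sf_neg]; ring
  · show A * Sf lam (π/2) + ↑b₁ * (B * Sf lam 0) = 0; rw [Sf_pos, Sf_zero]; exact e1
  · show B * Sf lam (-(π/2)) = 0; rw [Sf_neg]; ring
  · show B * Sf lam (π/2) + ↑b₂ * (A * Sf lam 0) = 0; rw [Sf_pos, Sf_zero]; exact e2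

theorem bwd (b₁ b₂ : ℝ) (m : ℤ) (hm : Odd m) (hb : b₁*b₂ ≤ 0) :
    ∃ lam : ℂ, lam.im = (m:ℝ) ∧ NSEigen b₁ b₂ lam := by
  have hpi := pi_pos
  set u := Real.arsinh (Real.sqrt (-(b₁*b₂)) / 2) with hu
  set lam : ℂ := ⟨2*u/π, (m:ℝ)⟩ with hlamdef
  have hre : lam.re = 2*u/π := rfl
  have him : lam.im = (m:ℝ) := rfl
  have hreu : lam.re * (π/2) = u := by rw [hre]; field_simp
  set s := Complex.sinh (lam*↑(π/2)) with hsdef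
  set c := Complex.cosh (lam*↑(π/2)) with hcdef
  have hs : s ≠ 0 := sinh_half_ne lam m hm him
  have hcre : c.re = 0 := cosh_half_re lam m hm him
  have hcim2 : c.im^2 = -(b₁*b₂)/4 := by
    have h1 : c.im = Real.sinh u * Real.sin ((m:ℝ)*(π/2)) := by
      rw [hcdef, mul_ofReal_decomp, cosh_decomp]
      simp only [Complex.add_im, Complex.mul_im, Complex.ofReal_im, Complex.ofReal_re,
        Complex.I_im, Complex.I_re, mul_zero, zero_mul, mul_one, zero_add, add_zero, him, hreu]
    rw [h1, mul_pow, odd_sin_sq m hm, mul_one, hu, Real.sinh_arsinh, div_pow,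
      Real.sq_sqrt (by linarith : (0:ℝ) ≤ -(b₁*b₂))]
    norm_num
  have hc2 : 4*c^2 = ((b₁:ℂ))*((b₂:ℂ)) := by
    obtain ⟨y, hcy⟩ : ∃ y : ℝ, c = ↑y * Complex.I ∧ y = c.im :=
      ⟨c.im, by apply Complex.ext <;> simp [hcre], rfl⟩
    obtain ⟨hcy, hyim⟩ := hcy
    have hy2 : y^2 = -(b₁*b₂)/4 := by rw [hyim]; exact hcim2
    have hyc : ((y:ℂ))^2 = ((-(b₁*b₂)/4 : ℝ) : ℂ) := by exact_mod_cast hy2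
    rw [hcy, mul_pow, Complex.I_sq, hyc]; push_cast; ring
  have hdouble : Complex.sinh (lam*↑π) = 2*s*c := by
    have hππ : lam*(↑π:ℂ) = 2*(lam*↑(π/2)) := by push_cast; ring
    rw [hππ, Complex.sinh_two_mul, hsdef, hcdef]
  rcases eq_or_ne b₁ 0 with hb1 | hb1
  · have hc0 : c = 0 := by
      have h4 : 4*c^2 = 0 := by rw [hc2, hb1]; simp
      have h5 : c^2 = 0 := by linear_combination h4/4
      exact (pow_eq_zero_iff two_ne_zero).mp h5
    refine ⟨lam, him, mk_eigen b₁ b₂ lam 0 1 ?_ ?_ (Or.inr one_ne_zero) hs⟩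
    · rw [hb1]; simp
    · rw [hdouble, hc0]; ring
  · refine ⟨lam, him, mk_eigen b₁ b₂ lam ↑b₁ (-2*c) ?_ ?_
      (Or.inl (Complex.ofReal_ne_zero.mpr hb1)) hs⟩
    · rw [hdouble]; ring
    · rw [hdouble]; linear_combination (-s) * hc2


theorem system_eigenvalue_on_odd_line_iff (b₁ b₂ : ℝ) (m : ℤ) (hm : Odd m) :
    (∃ lam : ℂ, lam.im = (m : ℝ) ∧ NSEigen b₁ b₂ lam) ↔ b₁ * b₂ ≤ 0 :=
  ⟨fwd b₁ b₂ m hm, bwd b₁ b₂ m hm⟩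
end

section
/- Let b₁ ∈ ℝ with b₁ ≠ 0 and set b₂ = 0; let k ∈ ℤ and set λ = (2k+1)·i. Then the pair φ₁⁰(ω) = cos((2k+1)ω), φ₂⁰(ω) = 0 is an eigenvector of the nonlocal system NS(b₁, 0) for the eigenvalue λ, and moreover there EXISTS a pair of twice differentiable functions φ₁, φ₂ : ℝ → ℂ with φⱼ''(ω) − λ²·φⱼ(ω) = 2λ·φⱼ⁰(ω) for all ω ∈ [−π/2, π/2] (j = 1, 2) and φ₁(−π/2) = 0, φ₁(π/2) + b₁·φ₂(0) = 0, φ₂(−π/2) = 0, φ₂(π/2) = 0. (That is, the eigenvalue λ = (2k+1)i of NS(b₁, 0) has an associated vector.) -/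
open Real Set

private lemma hasDerivAt_mul_self (μ z : ℂ) :
    HasDerivAt (fun w : ℂ => μ * w) μ z := by
  simpa using (hasDerivAt_id z).const_mul μ

private lemma hd_cos (μ : ℂ) (t : ℝ) :
    HasDerivAt (fun s : ℝ => Complex.cos (μ * (s : ℂ))) (-μ * Complex.sin (μ * t)) t := by
  have := ((hasDerivAt_mul_self μ (t : ℂ)).ccos).comp_ofReal
  simpa [mul_comm] using this

private lemma hd_sin (μ : ℂ) (t : ℝ) :
    HasDerivAt (fun s : ℝ => Complex.sin (μ * (s : ℂ))) (μ * Complex.cos (μ * t)) t := by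
  have := ((hasDerivAt_mul_self μ (t : ℂ)).csin).comp_ofReal
  simpa [mul_comm] using this

private lemma hd_lin (c a : ℂ) (t : ℝ) :
    HasDerivAt (fun s : ℝ => c * ((s : ℂ) + a)) c t := by
  have : HasDerivAt (fun w : ℂ => c * (w + a)) c (t : ℂ) := by
    simpa using ((hasDerivAt_id (t : ℂ)).add_const a).const_mul c
  simpa using this.comp_ofReal

private lemma cos_odd_half (k : ℤ) :
    Complex.cos ((2 * (k : ℂ) + 1) * ((π / 2 : ℝ) : ℂ)) = 0 := by
  have h : ((2 * (k : ℂ) + 1) * ((π / 2 : ℝ) : ℂ)) = (((k : ℝ) * π + π / 2 : ℝ) : ℂ) := by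
    push_cast; ring
  rw [h, ← Complex.ofReal_cos]
  norm_cast
  rw [Real.cos_add_pi_div_two]
  simp [ Real.sin_int_mul_pi k]

theorem system_has_associated_vector_odd (b₁ : ℝ) (hb : b₁ ≠ 0) (k : ℤ) :
    -- `(φ₁⁰, φ₂⁰) = (cos((2k+1)ω), 0)` is an eigenvector of `NS(b₁, 0)` for `λ = (2k+1)i`:
    (((∃ ω ∈ Icc (-(π / 2)) (π / 2),
          Complex.cos ((2 * (k : ℂ) + 1) * (ω : ℂ)) ≠ 0) ∨
        (∃ ω ∈ Icc (-(π / 2)) (π / 2), (0 : ℂ) ≠ 0)) ∧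
      (∀ ω ∈ Icc (-(π / 2)) (π / 2),
        deriv (deriv (fun t : ℝ => Complex.cos ((2 * (k : ℂ) + 1) * (t : ℂ)))) ω
          = ((2 * (k : ℂ) + 1) * Complex.I) ^ 2 * Complex.cos ((2 * (k : ℂ) + 1) * (ω : ℂ))) ∧
      (∀ ω ∈ Icc (-(π / 2)) (π / 2),
        deriv (deriv (fun _ : ℝ => (0 : ℂ))) ω
          = ((2 * (k : ℂ) + 1) * Complex.I) ^ 2 * 0) ∧
      Complex.cos ((2 * (k : ℂ) + 1) * ((-(π / 2) : ℝ) : ℂ)) = 0 ∧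
      Complex.cos ((2 * (k : ℂ) + 1) * (((π / 2) : ℝ) : ℂ)) + (b₁ : ℂ) * 0 = 0 ∧
      (0 : ℂ) = 0 ∧ (0 : ℂ) = 0) ∧
    -- and it has an associated vector:
    ∃ φ₁ φ₂ : ℝ → ℂ,
      Differentiable ℝ φ₁ ∧ Differentiable ℝ (deriv φ₁) ∧
      Differentiable ℝ φ₂ ∧ Differentiable ℝ (deriv φ₂) ∧
      (∀ ω ∈ Icc (-(π / 2)) (π / 2),
        deriv (deriv φ₁) ω - ((2 * (k : ℂ) + 1) * Complex.I) ^ 2 * φ₁ ω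
          = 2 * ((2 * (k : ℂ) + 1) * Complex.I) * Complex.cos ((2 * (k : ℂ) + 1) * (ω : ℂ))) ∧
      (∀ ω ∈ Icc (-(π / 2)) (π / 2),
        deriv (deriv φ₂) ω - ((2 * (k : ℂ) + 1) * Complex.I) ^ 2 * φ₂ ω
          = 2 * ((2 * (k : ℂ) + 1) * Complex.I) * 0) ∧
      φ₁ (-(π / 2)) = 0 ∧ φ₁ (π / 2) + (b₁ : ℂ) * φ₂ 0 = 0 ∧
      φ₂ (-(π / 2)) = 0 ∧ φ₂ (π / 2) = 0 := by
  set μ : ℂ := 2 * (k : ℂ) + 1 with hμ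
  -- boundary zeros of cos
  have hcosP : Complex.cos (μ * ((π / 2 : ℝ) : ℂ)) = 0 := cos_odd_half k
  have hcosN : Complex.cos (μ * ((-(π / 2) : ℝ) : ℂ)) = 0 := by
    have : (μ * ((-(π / 2) : ℝ) : ℂ)) = -(μ * ((π / 2 : ℝ) : ℂ)) := by push_cast; ring
    rw [this, Complex.cos_neg, hcosP]
  -- derivatives of cos(μ t)
  have hderiv1 : deriv (fun t : ℝ => Complex.cos (μ * (t : ℂ)))
      = fun t : ℝ => -μ * Complex.sin (μ * (t : ℂ)) :=
    funext fun t => (hd_cos μ t).deriv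
  have hderiv2 : deriv (deriv (fun t : ℝ => Complex.cos (μ * (t : ℂ))))
      = fun t : ℝ => -μ * (μ * Complex.cos (μ * (t : ℂ))) := by
    rw [hderiv1]
    exact funext fun t => (((hd_sin μ t).const_mul (-μ))).deriv
  constructor
  · refine ⟨Or.inl ⟨0, ⟨by nlinarith [Real.pi_pos], by nlinarith [Real.pi_pos]⟩, by simp⟩,
      ?_, fun ω _ => by simp, hcosN, by rw [hcosP]; ring, rfl, rfl⟩
    intro ω _
    rw [hderiv2]
    simp only []
    rw [mul_pow, Complex.I_sq]
    ring
  · -- associated vector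
    set c : ℂ := -(Complex.I * (π : ℂ) * Complex.sin (μ * ((π / 2 : ℝ) : ℂ))) / (b₁ : ℂ) with hc
    refine ⟨fun t : ℝ => Complex.I * ((t : ℂ) + (π / 2 : ℝ)) * Complex.sin (μ * (t : ℂ)),
            fun t : ℝ => c * Complex.cos (μ * (t : ℂ)), ?_⟩
    -- HasDerivAt facts for φ₁
    have h1 : ∀ t : ℝ, HasDerivAt
        (fun t : ℝ => Complex.I * ((t : ℂ) + (π / 2 : ℝ)) * Complex.sin (μ * (t : ℂ)))
        (Complex.I * Complex.sin (μ * (t : ℂ))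
          + Complex.I * ((t : ℂ) + (π / 2 : ℝ)) * (μ * Complex.cos (μ * (t : ℂ)))) t := by
      intro t
      exact (hd_lin Complex.I ((π / 2 : ℝ) : ℂ) t).mul (hd_sin μ t)
    have hφ₁d : deriv (fun t : ℝ => Complex.I * ((t : ℂ) + (π / 2 : ℝ)) * Complex.sin (μ * (t : ℂ)))
        = fun t : ℝ => Complex.I * Complex.sin (μ * (t : ℂ))
          + Complex.I * ((t : ℂ) + (π / 2 : ℝ)) * (μ * Complex.cos (μ * (t : ℂ))) :=
      funext fun t => (h1 t).deriv
    have h2 : ∀ t : ℝ, HasDerivAt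
        (fun t : ℝ => Complex.I * Complex.sin (μ * (t : ℂ))
          + Complex.I * ((t : ℂ) + (π / 2 : ℝ)) * (μ * Complex.cos (μ * (t : ℂ))))
        (Complex.I * (μ * Complex.cos (μ * (t : ℂ)))
          + (Complex.I * (μ * Complex.cos (μ * (t : ℂ)))
            + Complex.I * ((t : ℂ) + (π / 2 : ℝ)) * (μ * (-μ * Complex.sin (μ * (t : ℂ)))))) t := by
      intro t
      have ha := (hd_sin μ t).const_mul Complex.I
      have hb' := (hd_lin Complex.I ((π / 2 : ℝ) : ℂ) t).mul ((hd_cos μ t).const_mul μ)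
      have := ha.add hb'
      convert this using 1 <;> rfl
    have hφ₁dd : deriv (deriv (fun t : ℝ =>
          Complex.I * ((t : ℂ) + (π / 2 : ℝ)) * Complex.sin (μ * (t : ℂ))))
        = fun t : ℝ => Complex.I * (μ * Complex.cos (μ * (t : ℂ)))
          + (Complex.I * (μ * Complex.cos (μ * (t : ℂ)))
            + Complex.I * ((t : ℂ) + (π / 2 : ℝ)) * (μ * (-μ * Complex.sin (μ * (t : ℂ))))) := by
      rw [hφ₁d]; exact funext fun t => (h2 t).deriv
    -- HasDerivAt facts for φ₂
    have h3 : ∀ t : ℝ, HasDerivAt (fun t : ℝ => c * Complex.cos (μ * (t : ℂ)))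
        (c * (-μ * Complex.sin (μ * (t : ℂ)))) t := fun t => (hd_cos μ t).const_mul c
    have hφ₂d : deriv (fun t : ℝ => c * Complex.cos (μ * (t : ℂ)))
        = fun t : ℝ => c * (-μ * Complex.sin (μ * (t : ℂ))) := funext fun t => (h3 t).deriv
    have h4 : ∀ t : ℝ, HasDerivAt (fun t : ℝ => c * (-μ * Complex.sin (μ * (t : ℂ))))
        (c * (-μ * (μ * Complex.cos (μ * (t : ℂ))))) t := by
      intro t
      have := ((hd_sin μ t).const_mul (-μ)).const_mul c
      convert this using 1
    have hφ₂dd : deriv (deriv (fun t : ℝ => c * Complex.cos (μ * (t : ℂ))))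
        = fun t : ℝ => c * (-μ * (μ * Complex.cos (μ * (t : ℂ)))) := by
      rw [hφ₂d]; exact funext fun t => (h4 t).deriv
    refine ⟨fun t => (h1 t).differentiableAt, ?_, fun t => (h3 t).differentiableAt, ?_,
      ?_, ?_, ?_, ?_, ?_, ?_⟩
    · rw [hφ₁d]; exact fun t => (h2 t).differentiableAt
    · rw [hφ₂d]; exact fun t => (h4 t).differentiableAt
    · intro ω _
      rw [hφ₁dd]
      simp only []
      rw [mul_pow, Complex.I_sq]
      ring
    · intro ω _
      rw [hφ₂dd]
      simp only []
      rw [mul_pow, Complex.I_sq]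
      ring
    · have hz : ((-(π / 2) : ℝ) : ℂ) + ((π / 2 : ℝ) : ℂ) = 0 := by push_cast; ring
      simp only []
      rw [hz]
      ring
    · have hb' : (b₁ : ℂ) ≠ 0 := by exact_mod_cast hb
      have hhalf : ((π / 2 : ℝ) : ℂ) + ((π / 2 : ℝ) : ℂ) = (π : ℂ) := by push_cast; ring
      simp only [Complex.ofReal_zero, mul_zero, Complex.cos_zero, mul_one]
      rw [hhalf, hc]
      field_simp
      ring
    · simp only [hcosN, mul_zero]
    · simp only [hcosP, mul_zero]
end
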